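/- arXiv:math/0007108 — 7 statements merged into one kernel-verified Lean document; each statement's English description precedes it below -/
import Mathlib

section
/- For every τ in the complex upper half-plane and every z ∈ ℂ, one has θ(z, τ) = 0 if and only if z ∈ ℤ + τℤ, i.e. if and only if z = m + nτ for some integers m, n. -/
open Complex Real

/-- The Jacobi theta function, defined by the triple product
`θ(z,τ) = exp(πiτ/4) · 2 sin(πz) · ∏_{l≥1} (1-q^l)(1-q^l e^{2πiz})(1-q^l e^{-2πiz})`
where `q = exp(2πiτ)`. -/
noncomputable def jacobiThetaProd (z τ : ℂ) : ℂ :=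
  Complex.exp ((π : ℂ) * I * τ / 4) * (2 * Complex.sin ((π : ℂ) * z)) *
    ∏' l : ℕ,
      (1 - Complex.exp (2 * (π : ℂ) * I * τ) ^ (l + 1)) *
      (1 - Complex.exp (2 * (π : ℂ) * I * τ) ^ (l + 1) * Complex.exp (2 * (π : ℂ) * I * z)) *
      (1 - Complex.exp (2 * (π : ℂ) * I * τ) ^ (l + 1) * Complex.exp (-(2 * (π : ℂ) * I * z)))

/-- If one factor vanishes, the whole infinite product vanishes. -/
lemma tprod_eq_zero_of_factor_eq_zero (f : ℕ → ℂ) (l : ℕ) (h : f l = 0) :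
    ∏' i, f i = 0 := by
  have : HasProd f 0 := by
    rw [HasProd]
    apply Filter.Tendsto.congr' _ tendsto_const_nhds
    filter_upwards [Filter.eventually_ge_atTop {l}] with s hs
    exact (Finset.prod_eq_zero (hs (Finset.mem_singleton_self l)) h).symm
  exact this.tprod_eq

/-- If no factor vanishes, the triple product does not vanish. -/
lemma jacobiThetaProd_tprod_ne_zero (z τ : ℂ) (hτ : 0 < τ.im)
    (h : ∀ l : ℕ, (1 - Complex.exp (2 * (π : ℂ) * I * τ) ^ (l + 1)) *
      (1 - Complex.exp (2 * (π : ℂ) * I * τ) ^ (l + 1) * Complex.exp (2 * (π : ℂ) * I * z)) *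
      (1 - Complex.exp (2 * (π : ℂ) * I * τ) ^ (l + 1) * Complex.exp (-(2 * (π : ℂ) * I * z))) ≠ 0) :
    (∏' l : ℕ,
      (1 - Complex.exp (2 * (π : ℂ) * I * τ) ^ (l + 1)) *
      (1 - Complex.exp (2 * (π : ℂ) * I * τ) ^ (l + 1) * Complex.exp (2 * (π : ℂ) * I * z)) *
      (1 - Complex.exp (2 * (π : ℂ) * I * τ) ^ (l + 1) * Complex.exp (-(2 * (π : ℂ) * I * z)))) ≠ 0 := by
  set Q := Complex.exp (2 * (π : ℂ) * I * τ) with hQdef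
  set w := Complex.exp (2 * (π : ℂ) * I * z) with hwdef
  set w' := Complex.exp (-(2 * (π : ℂ) * I * z)) with hw'def
  set f : ℕ → ℂ := fun l => (1 - Q ^ (l + 1)) * (1 - Q ^ (l + 1) * w) * (1 - Q ^ (l + 1) * w') with hfdef
  set r := ‖Q‖ with hrdef
  have hr0 : 0 ≤ r := norm_nonneg _
  have hr1 : r < 1 := by
    rw [hrdef, hQdef, Complex.norm_exp]
    apply Real.exp_lt_one_iff.mpr
    have : (2 * (π:ℂ) * I * τ).re = -(2 * π * τ.im) := by
      simp [Complex.mul_re, Complex.mul_im]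
    rw [this]
    have := Real.pi_pos
    nlinarith
  set W := ‖w‖ with hWdef
  set W' := ‖w'‖ with hW'def
  have hW0 : 0 ≤ W := norm_nonneg _
  have hW'0 : 0 ≤ W' := norm_nonneg _
  set C : ℝ := (1 + W) * (1 + W') + W * (1 + W') + W' with hCdef
  have hC0 : 0 ≤ C := by positivity
  -- the basic bound
  have hbound : ∀ l : ℕ, ‖f l - 1‖ ≤ C * r ^ (l + 1) := by
    intro l
    have hpow1 : r ^ (l + 1) ≤ 1 := pow_le_one₀ hr0 hr1.le
    have hid : f l - 1 = -(Q ^ (l+1) * ((1 - Q^(l+1)*w) * (1 - Q^(l+1)*w')))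
        - (Q^(l+1)*w) * (1 - Q^(l+1)*w') - Q^(l+1)*w' := by
      simp only [hfdef]; ring
    rw [hid]
    have hQn : ‖Q ^ (l+1)‖ = r ^ (l+1) := by rw [norm_pow]
    have hb : ‖Q^(l+1)*w‖ ≤ r^(l+1) * W := by rw [norm_mul, hQn]
    have hc : ‖Q^(l+1)*w'‖ ≤ r^(l+1) * W' := by rw [norm_mul, hQn]
    have h1b : ‖1 - Q^(l+1)*w‖ ≤ 1 + W := by
      calc ‖1 - Q^(l+1)*w‖ ≤ ‖(1:ℂ)‖ + ‖Q^(l+1)*w‖ := norm_sub_le _ _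
      _ ≤ 1 + W := by
          rw [norm_one]
          have : r^(l+1) * W ≤ 1 * W := by gcongr
          simp only [one_mul] at this
          linarith [hb.trans this]
    have h1c : ‖1 - Q^(l+1)*w'‖ ≤ 1 + W' := by
      calc ‖1 - Q^(l+1)*w'‖ ≤ ‖(1:ℂ)‖ + ‖Q^(l+1)*w'‖ := norm_sub_le _ _
      _ ≤ 1 + W' := by
          rw [norm_one]
          have : r^(l+1) * W' ≤ 1 * W' := by gcongr
          simp only [one_mul] at this
          linarith [hc.trans this]
    calc ‖-(Q ^ (l+1) * ((1 - Q^(l+1)*w) * (1 - Q^(l+1)*w')))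
        - (Q^(l+1)*w) * (1 - Q^(l+1)*w') - Q^(l+1)*w'‖
        ≤ ‖Q ^ (l+1) * ((1 - Q^(l+1)*w) * (1 - Q^(l+1)*w'))‖
          + ‖(Q^(l+1)*w) * (1 - Q^(l+1)*w')‖ + ‖Q^(l+1)*w'‖ := by
          refine (norm_sub_le _ _).trans ?_
          gcongr
          refine (norm_sub_le _ _).trans ?_
          rw [norm_neg]
      _ ≤ r^(l+1) * ((1+W)*(1+W')) + (r^(l+1)*W) * (1+W') + r^(l+1)*W' := by
          gcongr
          · rw [norm_mul, hQn]
            gcongr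
            rw [norm_mul]
            exact mul_le_mul h1b h1c (norm_nonneg _) (by positivity)
          · rw [norm_mul]
            exact mul_le_mul hb h1c (norm_nonneg _) (by positivity)
      _ = C * r ^ (l+1) := by rw [hCdef]; ring
  -- summability of logs
  have hgsum : Summable (fun l : ℕ => (3/2 : ℝ) * (C * r ^ (l + 1))) := by
    have : Summable (fun l : ℕ => r ^ l) := summable_geometric_of_lt_one hr0 hr1
    have := this.mul_left ((3/2 : ℝ) * C * r)
    apply this.congr
    intro l; ring
  have hlogsum : Summable (fun l : ℕ => Complex.log (f l)) := by
    apply Summable.of_norm_bounded_eventually_nat (g := fun l => (3/2 : ℝ) * (C * r ^ (l + 1))) hgsum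
    have htend : Filter.Tendsto (fun l : ℕ => C * r ^ (l + 1)) Filter.atTop (nhds 0) := by
      have h1 : Filter.Tendsto (fun l : ℕ => r ^ l) Filter.atTop (nhds 0) :=
        tendsto_pow_atTop_nhds_zero_of_lt_one hr0 hr1
      have h2 : Filter.Tendsto (fun l : ℕ => (C * r) * r ^ l) Filter.atTop (nhds ((C*r)*0)) :=
        h1.const_mul _
      simp only [mul_zero] at h2
      exact h2.congr (fun l => by ring)
    filter_upwards [htend.eventually_le_const (by norm_num : (0:ℝ) < 1/2)] with l hl
    have hsmall : ‖f l - 1‖ ≤ 1/2 := (hbound l).trans hl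
    have : Complex.log (f l) = Complex.log (1 + (f l - 1)) := by congr 1; ring
    rw [this]
    calc ‖Complex.log (1 + (f l - 1))‖ ≤ (3/2) * ‖f l - 1‖ :=
          Complex.norm_log_one_add_half_le_self hsmall
      _ ≤ (3/2) * (C * r ^ (l+1)) := by gcongr; exact hbound l
  -- conclude via exp of tsum
  have := Complex.cexp_tsum_eq_tprod (f := f) h
    hlogsum
  have heq := this
  rw [← heq]
  exact Complex.exp_ne_zero _

/-- Vanishing locus of the Jacobi theta function: `θ(z,τ) = 0` iff `z ∈ ℤ + τℤ`. -/
theorem jacobiTheta_zero_iff (τ : ℂ) (hτ : 0 < τ.im) (z : ℂ) :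
    jacobiThetaProd z τ = 0 ↔ ∃ m n : ℤ, z = (m : ℂ) + (n : ℂ) * τ := by
  have hπ : (π : ℂ) ≠ 0 := Complex.ofReal_ne_zero.mpr Real.pi_ne_zero
  have h2πI : (2 * (π : ℂ) * I) ≠ 0 := by
    simp [hπ, Complex.I_ne_zero]
  have hr1 : ‖Complex.exp (2 * (π:ℂ) * I * τ)‖ < 1 := by
    rw [Complex.norm_exp]
    apply Real.exp_lt_one_iff.mpr
    have : (2 * (π:ℂ) * I * τ).re = -(2 * π * τ.im) := by
      simp [Complex.mul_re, Complex.mul_im]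
    rw [this]
    have := Real.pi_pos
    nlinarith
  rw [jacobiThetaProd]
  constructor
  · intro h
    rcases mul_eq_zero.mp h with h | hP
    · rcases mul_eq_zero.mp h with h | hs
      · exact absurd h (Complex.exp_ne_zero _)
      · rcases mul_eq_zero.mp hs with h2 | hsin
        · norm_num at h2
        · obtain ⟨k, hk⟩ := Complex.sin_eq_zero_iff.mp hsin
          refine ⟨k, 0, ?_⟩
          have : (π:ℂ) * z = (π:ℂ) * (k : ℂ) := by rw [hk]; ring
          have := mul_left_cancel₀ hπ this
          simp [this]
    · -- some factor of the infinite product vanishes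
      by_contra hne
      push_neg at hne
      have hall : ∀ l : ℕ, (1 - Complex.exp (2 * (π : ℂ) * I * τ) ^ (l + 1)) *
          (1 - Complex.exp (2 * (π : ℂ) * I * τ) ^ (l + 1) * Complex.exp (2 * (π : ℂ) * I * z)) *
          (1 - Complex.exp (2 * (π : ℂ) * I * τ) ^ (l + 1) *
            Complex.exp (-(2 * (π : ℂ) * I * z))) ≠ 0 := by
        intro l hl
        rcases mul_eq_zero.mp hl with hl | hl3
        · rcases mul_eq_zero.mp hl with hl1 | hl2
          · -- 1 - Q^(l+1) = 0 : impossible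
            have hQ1 : Complex.exp (2 * (π:ℂ) * I * τ) ^ (l+1) = 1 := by
              linear_combination -hl1
            have := congrArg norm hQ1
            rw [norm_pow, norm_one] at this
            have hlt : ‖Complex.exp (2 * (π:ℂ) * I * τ)‖ ^ (l+1) < 1 :=
              pow_lt_one₀ (norm_nonneg _) hr1 (Nat.succ_ne_zero l)
            rw [this] at hlt
            exact absurd hlt (lt_irrefl _)
          · -- Q^(l+1) e^{2πiz} = 1 : z = k - (l+1)τ
            have hQ1 : Complex.exp ((l+1 : ℕ) * (2 * (π:ℂ) * I * τ) + 2 * (π:ℂ) * I * z) = 1 := by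
              rw [Complex.exp_add, Complex.exp_nat_mul]
              linear_combination -hl2
            obtain ⟨k, hk⟩ := Complex.exp_eq_one_iff.mp hQ1
            have hz : (2 * (π:ℂ) * I) * z = (2 * (π:ℂ) * I) * ((k:ℂ) - ((l:ℂ)+1) * τ) := by
              push_cast at hk ⊢
              linear_combination hk
            have hz' := mul_left_cancel₀ h2πI hz
            exact hne k (-((l:ℤ)+1)) (by push_cast; rw [hz']; ring)
        · -- Q^(l+1) e^{-2πiz} = 1 : z = -k + (l+1)τ
          have hQ1 : Complex.exp ((l+1 : ℕ) * (2 * (π:ℂ) * I * τ) + -(2 * (π:ℂ) * I * z)) = 1 := by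
            rw [Complex.exp_add, Complex.exp_nat_mul]
            linear_combination -hl3
          obtain ⟨k, hk⟩ := Complex.exp_eq_one_iff.mp hQ1
          have hz : (2 * (π:ℂ) * I) * z = (2 * (π:ℂ) * I) * (-(k:ℂ) + ((l:ℂ)+1) * τ) := by
            push_cast at hk ⊢
            linear_combination -hk
          have hz' := mul_left_cancel₀ h2πI hz
          exact hne (-k) ((l:ℤ)+1) (by push_cast; rw [hz'])
      exact jacobiThetaProd_tprod_ne_zero z τ hτ hall hP
  · rintro ⟨m, n, rfl⟩
    rcases lt_trichotomy n 0 with hn | hn | hn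
    · -- n < 0 : second sub-factor at l = (-n-1).toNat vanishes
      set l : ℕ := (-n-1).toNat with hldef
      have hln : ((l : ℤ) + 1) = -n := by
        rw [hldef]; omega
      have hfac : (1 - Complex.exp (2 * (π : ℂ) * I * τ) ^ (l + 1) *
          Complex.exp (2 * (π : ℂ) * I * ((m:ℂ) + (n:ℂ) * τ))) = 0 := by
        rw [← Complex.exp_nat_mul, ← Complex.exp_add]
        have harg : ((l+1 : ℕ) : ℂ) * (2 * (π:ℂ) * I * τ) + 2 * (π:ℂ) * I * ((m:ℂ) + (n:ℂ) * τ)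
            = (m : ℂ) * (2 * (π:ℂ) * I) := by
          have : ((l+1 : ℕ) : ℂ) = -(n : ℂ) := by
            exact_mod_cast congrArg (Int.cast : ℤ → ℂ) hln
          rw [this]; ring
        rw [harg, Complex.exp_int_mul_two_pi_mul_I]
        ring
      have hfl : (1 - Complex.exp (2 * (π : ℂ) * I * τ) ^ (l + 1)) *
          (1 - Complex.exp (2 * (π : ℂ) * I * τ) ^ (l + 1) *
            Complex.exp (2 * (π : ℂ) * I * ((m:ℂ) + (n:ℂ) * τ))) *
          (1 - Complex.exp (2 * (π : ℂ) * I * τ) ^ (l + 1) *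
            Complex.exp (-(2 * (π : ℂ) * I * ((m:ℂ) + (n:ℂ) * τ)))) = 0 := by
        rw [hfac]; ring
      rw [tprod_eq_zero_of_factor_eq_zero _ l hfl]
      ring
    · -- n = 0 : sine factor vanishes
      subst hn
      have hsin : Complex.sin ((π:ℂ) * ((m:ℂ) + (0:ℤ) * τ)) = 0 := by
        apply Complex.sin_eq_zero_iff.mpr
        exact ⟨m, by push_cast; ring⟩
      rw [hsin]
      ring
    · -- n > 0 : third sub-factor at l = (n-1).toNat vanishes
      set l : ℕ := (n-1).toNat with hldef
      have hln : ((l : ℤ) + 1) = n := by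
        rw [hldef]; omega
      have hfac : (1 - Complex.exp (2 * (π : ℂ) * I * τ) ^ (l + 1) *
          Complex.exp (-(2 * (π : ℂ) * I * ((m:ℂ) + (n:ℂ) * τ)))) = 0 := by
        rw [← Complex.exp_nat_mul, ← Complex.exp_add]
        have harg : ((l+1 : ℕ) : ℂ) * (2 * (π:ℂ) * I * τ) + -(2 * (π:ℂ) * I * ((m:ℂ) + (n:ℂ) * τ))
            = (-m : ℂ) * (2 * (π:ℂ) * I) := by
          have : ((l+1 : ℕ) : ℂ) = (n : ℂ) := by
            exact_mod_cast congrArg (Int.cast : ℤ → ℂ) hln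
          rw [this]; ring
        rw [harg]
        have : ((-m : ℂ)) * (2 * (π:ℂ) * I) = ((-m : ℤ) : ℂ) * (2 * (π:ℂ) * I) := by push_cast; ring
        rw [this, Complex.exp_int_mul_two_pi_mul_I]
        ring
      have hfl : (1 - Complex.exp (2 * (π : ℂ) * I * τ) ^ (l + 1)) *
          (1 - Complex.exp (2 * (π : ℂ) * I * τ) ^ (l + 1) *
            Complex.exp (2 * (π : ℂ) * I * ((m:ℂ) + (n:ℂ) * τ))) *
          (1 - Complex.exp (2 * (π : ℂ) * I * τ) ^ (l + 1) *
            Complex.exp (-(2 * (π : ℂ) * I * ((m:ℂ) + (n:ℂ) * τ)))) = 0 := by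
        rw [hfac]; ring
      rw [tprod_eq_zero_of_factor_eq_zero _ l hfl]
      ring
end

section
/- For every τ in the complex upper half-plane, the derivative of the Jacobi theta function in its first variable at z = 0 is given by the product formula θ′(0, τ) = 2π · exp(πiτ/4) · ∏_{l=1}^∞ (1 − q^l)³, where q = exp(2πiτ); in particular θ′(0, τ) ≠ 0. -/
open Complex Real Filter Topology

/-- `θ′(0,τ)`: the derivative of the Jacobi theta function in its first variable at `z = 0`. -/
noncomputable def jacobiThetaProdDeriv (τ : ℂ) : ℂ :=
  deriv (fun z => jacobiThetaProd z τ) 0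

/-- The `l`-th factor of the triple product. -/
noncomputable def thetaFactor (q z : ℂ) (l : ℕ) : ℂ :=
  (1 - q ^ (l + 1)) * (1 - q ^ (l + 1) * Complex.exp (2 * (π : ℂ) * I * z)) *
    (1 - q ^ (l + 1) * Complex.exp (-(2 * (π : ℂ) * I * z)))

lemma triple_sub_one_bound {a b c : ℂ} {t : ℝ} (ht : t ≤ 1)
    (ha : ‖a‖ ≤ t) (hb : ‖b‖ ≤ t) (hc : ‖c‖ ≤ t) :
    ‖(1 - a) * (1 - b) * (1 - c) - 1‖ ≤ 7 * t := by
  have h0 : (0:ℝ) ≤ t := le_trans (norm_nonneg a) ha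
  have h : (1 - a) * (1 - b) * (1 - c) - 1 =
      (-(a + b + c) + (a * b + b * c + a * c)) - a * b * c := by ring
  rw [h]
  have h1 : ‖-(a + b + c) + (a * b + b * c + a * c)‖ ≤ 3 * t + 3 * (t * t) := by
    refine le_trans (norm_add_le _ _) ?_
    have hA : ‖-(a + b + c)‖ ≤ 3 * t := by
      rw [norm_neg]
      calc ‖a + b + c‖ ≤ ‖a‖ + ‖b‖ + ‖c‖ := norm_add₃_le
        _ ≤ 3 * t := by linarith
    have hB : ‖a * b + b * c + a * c‖ ≤ 3 * (t * t) := by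
      calc ‖a * b + b * c + a * c‖ ≤ ‖a * b‖ + ‖b * c‖ + ‖a * c‖ := norm_add₃_le
        _ ≤ t * t + t * t + t * t := by
            refine add_le_add (add_le_add ?_ ?_) ?_ <;>
              exact le_trans (norm_mul_le _ _) (by
                first
                | exact mul_le_mul ha hb (norm_nonneg _) h0
                | exact mul_le_mul hb hc (norm_nonneg _) h0
                | exact mul_le_mul ha hc (norm_nonneg _) h0)
        _ = 3 * (t * t) := by ring
    linarith
  have h2 : ‖a * b * c‖ ≤ t * t * t := by
    refine le_trans (norm_mul_le _ _) ?_
    refine mul_le_mul (le_trans (norm_mul_le _ _)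
      (mul_le_mul ha hb (norm_nonneg _) h0)) hc (norm_nonneg _) (by nlinarith)
  calc ‖(-(a + b + c) + (a * b + b * c + a * c)) - a * b * c‖
      ≤ ‖-(a + b + c) + (a * b + b * c + a * c)‖ + ‖a * b * c‖ := norm_sub_le _ _
    _ ≤ (3 * t + 3 * (t * t)) + t * t * t := by linarith
    _ ≤ 7 * t := by nlinarith

lemma theta_prod_aux (q : ℂ) (h0 : 0 < ‖q‖) (h1 : ‖q‖ < 1) :
    ContinuousAt (fun z => ∏' l, thetaFactor q z l) 0 ∧ (∏' l, thetaFactor q 0 l) ≠ 0 := by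
  set r : ℝ := ‖q‖ with hrdef
  set ρ : ℝ := (1 + r) / 2 with hρdef
  have hρr : r < ρ := by rw [hρdef]; linarith
  have hρ1 : ρ < 1 := by rw [hρdef]; linarith
  have hρ0 : 0 < ρ := lt_trans h0 hρr
  set δ : ℝ := Real.log (ρ / r) / (2 * π) with hδdef
  have hπ : (0:ℝ) < π := Real.pi_pos
  have hρr1 : 1 < ρ / r := (one_lt_div h0).2 hρr
  have hδ : 0 < δ := div_pos (Real.log_pos hρr1) (by positivity)
  have hexpδ : Real.exp (2 * π * δ) = ρ / r := by
    rw [hδdef]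
    rw [mul_div_cancel₀ _ (by positivity : (2:ℝ) * π ≠ 0)]
    exact Real.exp_log (by positivity)
  set U : Set ℂ := Metric.closedBall (0:ℂ) δ with hUdef
  have hU : U ∈ 𝓝 (0:ℂ) := Metric.closedBall_mem_nhds 0 hδ
  have h0U : (0:ℂ) ∈ U := Metric.mem_closedBall_self hδ.le
  -- norm of the exponentials
  have hexp_bound : ∀ z ∈ U, ∀ s : ℂ, ‖s‖ = 2 * π * ‖z‖ → ‖Complex.exp s‖ ≤ ρ / r := by
    intro z hz s hs
    have hzδ : ‖z‖ ≤ δ := by simpa [hUdef, Complex.dist_eq] using hz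
    have : ‖Complex.exp s‖ = Real.exp s.re := by
      rw [Complex.norm_exp]
    rw [this, ← hexpδ]
    apply Real.exp_le_exp.2
    refine le_trans (Complex.re_le_norm s) ?_
    rw [hs]
    have : 2 * π * ‖z‖ ≤ 2 * π * δ := by nlinarith [norm_nonneg z]
    linarith
  have hnorm2πz : ∀ z : ℂ, ‖2 * (π : ℂ) * I * z‖ = 2 * π * ‖z‖ := by
    intro z
    simp [norm_mul, abs_of_pos hπ]
  -- the key factor bound on U
  have hkey : ∀ z ∈ U, ∀ l : ℕ, ‖thetaFactor q z l - 1‖ ≤ 7 * ρ ^ (l + 1) := by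
    intro z hz l
    have hq_pow : ‖q ^ (l + 1)‖ = r ^ (l + 1) := by
      rw [norm_pow]
    have ht1 : ρ ^ (l + 1) ≤ 1 := pow_le_one₀ hρ0.le hρ1.le
    have hb1 : ‖q ^ (l + 1)‖ ≤ ρ ^ (l + 1) := by
      rw [hq_pow]; exact pow_le_pow_left₀ (norm_nonneg q) hρr.le _
    have hmix : ∀ s : ℂ, ‖Complex.exp s‖ ≤ ρ / r →
        ‖q ^ (l + 1) * Complex.exp s‖ ≤ ρ ^ (l + 1) := by
      intro s hs
      calc ‖q ^ (l + 1) * Complex.exp s‖ ≤ r ^ (l + 1) * (ρ / r) := by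
            rw [norm_mul, hq_pow]
            exact mul_le_mul_of_nonneg_left hs (by positivity)
        _ = ρ * r ^ l := by field_simp [pow_succ]; ring
        _ ≤ ρ * ρ ^ l := by
            exact mul_le_mul_of_nonneg_left (pow_le_pow_left₀ h0.le hρr.le _) hρ0.le
        _ = ρ ^ (l + 1) := by rw [pow_succ]; ring
    have hb2 := hmix _ (hexp_bound z hz _ (hnorm2πz z))
    have hb3 : ‖q ^ (l + 1) * Complex.exp (-(2 * (π : ℂ) * I * z))‖ ≤ ρ ^ (l + 1) := by
      refine hmix _ (hexp_bound z hz _ ?_)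
      rw [norm_neg]; exact hnorm2πz z
    exact triple_sub_one_bound ht1 hb1 hb2 hb3
  -- choose N
  obtain ⟨N, hN⟩ := exists_pow_lt_of_lt_one (by norm_num : (0:ℝ) < 1/14) hρ1
  have htail_half : ∀ z ∈ U, ∀ l : ℕ, ‖thetaFactor q z (l + N) - 1‖ ≤ 1 / 2 := by
    intro z hz l
    refine le_trans (hkey z hz _) ?_
    have : ρ ^ (l + N + 1) ≤ ρ ^ N :=
      pow_le_pow_of_le_one hρ0.le hρ1.le (by omega)
    nlinarith
  have hne : ∀ z ∈ U, ∀ l : ℕ, thetaFactor q z (l + N) ≠ 0 := by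
    intro z hz l h
    have := htail_half z hz l
    rw [h] at this
    norm_num at this
  -- bound on logs
  set u : ℕ → ℝ := fun l => (21/2) * ρ ^ (N + 1) * ρ ^ l with hudef
  have hu : Summable u := (summable_geometric_of_lt_one hρ0.le hρ1).mul_left _
  have hlog : ∀ z ∈ U, ∀ l : ℕ, ‖Complex.log (thetaFactor q z (l + N))‖ ≤ u l := by
    intro z hz l
    have h12 := htail_half z hz l
    have := Complex.norm_log_one_add_half_le_self (z := thetaFactor q z (l + N) - 1) h12
    rw [add_sub_cancel] at this
    refine le_trans this ?_
    refine le_trans (by nlinarith [hkey z hz (l + N)] :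
      (3/2 : ℝ) * ‖thetaFactor q z (l + N) - 1‖ ≤ (21/2) * ρ ^ (l + N + 1)) ?_
    rw [hudef]
    have : ρ ^ (l + N + 1) = ρ ^ (N + 1) * ρ ^ l := by rw [← pow_add]; ring_nf
    rw [this]; ring_nf; rfl
  have hSsum : ∀ z ∈ U, Summable fun l => Complex.log (thetaFactor q z (l + N)) := by
    intro z hz
    exact Summable.of_norm_bounded hu (hlog z hz)
  set S : ℂ → ℂ := fun z => ∑' l, Complex.log (thetaFactor q z (l + N)) with hSdef
  have hprod_tail : ∀ z ∈ U, HasProd (fun l => thetaFactor q z (l + N)) (Complex.exp (S z)) := by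
    intro z hz
    have h := ((hSsum z hz).hasSum).cexp
    have heq : (fun l => thetaFactor q z (l + N)) =
        cexp ∘ fun l => Complex.log (thetaFactor q z (l + N)) :=
      funext fun l => (Complex.exp_log (hne z hz l)).symm
    rw [heq]; exact h
  have hPeq : ∀ z ∈ U, (∏' l, thetaFactor q z l) =
      (∏ l ∈ Finset.range N, thetaFactor q z l) * Complex.exp (S z) := by
    intro z hz
    exact ((hprod_tail z hz).prod_range_mul).tprod_eq
  -- continuity of each factor
  have hFc : ∀ l : ℕ, Continuous fun z => thetaFactor q z l := by
    intro l
    unfold thetaFactor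
    fun_prop
  have hScont : ContinuousOn S U := by
    rw [hSdef]
    refine continuousOn_tsum (fun l => ?_) hu (fun l z hz => hlog z hz l)
    refine ContinuousOn.clog (hFc (l + N)).continuousOn ?_
    intro z hz
    have h12 := htail_half z hz l
    have hre := Complex.abs_re_le_norm (thetaFactor q z (l + N) - 1)
    have : |(thetaFactor q z (l + N)).re - 1| ≤ 1/2 := by
      have he : ((thetaFactor q z (l + N)) - 1).re = (thetaFactor q z (l + N)).re - 1 := by simp
      rw [← he]; exact le_trans hre h12
    rw [Complex.mem_slitPlane_iff]
    left
    cases' abs_le.1 this with hl hr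
    linarith
  have hQcont : ContinuousAt (fun z =>
      (∏ l ∈ Finset.range N, thetaFactor q z l) * Complex.exp (S z)) 0 := by
    refine ContinuousAt.mul ?_ ?_
    · exact (continuous_finset_prod _ fun l _ => hFc l).continuousAt
    · exact (hScont.continuousAt hU).cexp
  constructor
  · refine hQcont.congr ?_
    filter_upwards [hU] with z hz
    exact (hPeq z hz).symm
  · rw [hPeq 0 h0U]
    refine mul_ne_zero ?_ (Complex.exp_ne_zero _)
    refine Finset.prod_ne_zero_iff.2 fun l _ => ?_
    have hqp : 1 - q ^ (l + 1) ≠ 0 := by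
      intro h
      have : q ^ (l + 1) = 1 := by linear_combination -h
      have habs : ‖q ^ (l + 1)‖ = 1 := by rw [this]; simp
      rw [norm_pow] at habs
      have : r ^ (l + 1) < 1 := pow_lt_one₀ (norm_nonneg q) h1 (by omega)
      rw [habs] at this; norm_num at this
    unfold thetaFactor
    simp only [mul_zero, Complex.exp_zero, neg_zero, mul_one]
    exact mul_ne_zero (mul_ne_zero hqp (by simpa using hqp)) (by simpa using hqp)

theorem jacobi_aux (τ : ℂ) (hτ : 0 < τ.im) :
    deriv (fun z => Complex.exp ((π : ℂ) * I * τ / 4) * (2 * Complex.sin ((π : ℂ) * z)) *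
      ∏' l : ℕ, thetaFactor (Complex.exp (2 * (π : ℂ) * I * τ)) z l) 0 =
      2 * (π : ℂ) * Complex.exp ((π : ℂ) * I * τ / 4) *
        ∏' l : ℕ, (1 - Complex.exp (2 * (π : ℂ) * I * τ) ^ (l + 1)) ^ 3 ∧
    deriv (fun z => Complex.exp ((π : ℂ) * I * τ / 4) * (2 * Complex.sin ((π : ℂ) * z)) *
      ∏' l : ℕ, thetaFactor (Complex.exp (2 * (π : ℂ) * I * τ)) z l) 0 ≠ 0 := by
  set q : ℂ := Complex.exp (2 * (π : ℂ) * I * τ) with hqdef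
  have hq0 : 0 < ‖q‖ := norm_pos_iff.mpr (Complex.exp_ne_zero _)
  have hq1 : ‖q‖ < 1 := by
    rw [hqdef, Complex.norm_exp, Real.exp_lt_one_iff]
    have hre : (2 * (π : ℂ) * I * τ).re = -(2 * π * τ.im) := by
      simp [Complex.mul_re, Complex.mul_im]
    rw [hre]
    have := Real.pi_pos
    nlinarith
  obtain ⟨hcont, hne0⟩ := theta_prod_aux q hq0 hq1
  set P : ℂ → ℂ := fun z => ∏' l, thetaFactor q z l with hPdef
  set A : ℂ := Complex.exp ((π : ℂ) * I * τ / 4) with hAdef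
  have hs : HasDerivAt (fun z : ℂ => Complex.sin ((π : ℂ) * z)) (π : ℂ) 0 := by
    have h1 : HasDerivAt (fun z : ℂ => (π : ℂ) * z) ((π : ℂ) * 1) 0 :=
      (hasDerivAt_id (0 : ℂ)).const_mul (π : ℂ)
    have := (Complex.hasDerivAt_sin ((π : ℂ) * 0)).comp 0 h1
    simp only [mul_zero, Complex.cos_zero, one_mul, mul_one] at this
    exact this
  have hh : HasDerivAt (fun z : ℂ => A * (2 * Complex.sin ((π : ℂ) * z))) (A * (2 * (π : ℂ))) 0 :=
    (hs.const_mul 2).const_mul A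
  have hP0 : Filter.Tendsto P (nhdsWithin (0 : ℂ) {(0:ℂ)}ᶜ) (nhds (P 0)) :=
    hcont.tendsto.mono_left nhdsWithin_le_nhds
  have hslope_h : Filter.Tendsto (slope (fun z : ℂ => A * (2 * Complex.sin ((π : ℂ) * z))) 0)
      (nhdsWithin (0 : ℂ) {(0:ℂ)}ᶜ) (nhds (A * (2 * (π : ℂ)))) :=
    hasDerivAt_iff_tendsto_slope.mp hh
  have hf : HasDerivAt (fun z => A * (2 * Complex.sin ((π : ℂ) * z)) * P z)
      (A * (2 * (π : ℂ)) * P 0) 0 := by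
    rw [hasDerivAt_iff_tendsto_slope]
    refine Filter.Tendsto.congr' ?_ (hslope_h.mul hP0)
    filter_upwards [self_mem_nhdsWithin] with z hz
    have hz0 : z ≠ 0 := hz
    rw [slope_def_field, slope_def_field]
    have hsin0 : Complex.sin ((π : ℂ) * 0) = 0 := by simp
    rw [hsin0]
    field_simp
    ring
  constructor
  · rw [hf.deriv]
    have hP0eq : P 0 = ∏' l : ℕ, (1 - q ^ (l + 1)) ^ 3 := by
      refine tprod_congr fun l => ?_
      simp only [thetaFactor, mul_zero, Complex.exp_zero, neg_zero, mul_one]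
      ring
    rw [hP0eq]
    ring
  · rw [hf.deriv]
    refine mul_ne_zero (mul_ne_zero (Complex.exp_ne_zero _) ?_) hne0
    exact mul_ne_zero two_ne_zero (Complex.ofReal_ne_zero.2 Real.pi_ne_zero)

/-- Product formula for `θ′(0,τ)` and its nonvanishing:
`θ′(0,τ) = 2π·exp(πiτ/4)·∏_{l≥1}(1−q^l)³ ≠ 0`. -/
theorem jacobiThetaDeriv_eq_prod (τ : ℂ) (hτ : 0 < τ.im) :
    jacobiThetaProdDeriv τ =
      2 * (π : ℂ) * Complex.exp ((π : ℂ) * I * τ / 4) *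
        ∏' l : ℕ, (1 - Complex.exp (2 * (π : ℂ) * I * τ) ^ (l + 1)) ^ 3 ∧
    jacobiThetaProdDeriv τ ≠ 0 := by
  have h := jacobi_aux τ hτ
  exact h
end

section
/- For every τ in the complex upper half-plane (with q = exp(2πiτ)) and every z ∈ ℂ, one has exp(−πi·z) · G(exp(2πi·z), q) = 2πi · θ(−z, τ) / θ′(0, τ). -/
open Complex Real

open Filter Topology

lemma tprod_eq_zero_of_exists {f : ℕ → ℂ} {i : ℕ} (h : f i = 0) : ∏' n, f n = 0 := by
  have hp : HasProd f 0 := by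
    unfold HasProd
    apply Tendsto.congr' _ tendsto_const_nhds
    filter_upwards [Filter.eventually_ge_atTop ({i} : Finset ℕ)] with s hs
    exact (Finset.prod_eq_zero (hs (Finset.mem_singleton_self i)) h).symm
  exact hp.tprod_eq

lemma tprod_eq_cexp_tsum {f g : ℕ → ℂ} (h : ∀ n, f n = cexp (g n)) (hs : Summable g) :
    ∏' n, f n = cexp (∑' n, g n) := by
  rw [show f = cexp ∘ g from funext h]
  exact hs.hasSum.cexp.tprod_eq

lemma multipliable_one_sub {f : ℕ → ℂ} (hf : Summable f) :
    Multipliable (fun n => 1 - f n) := by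
  by_cases h : ∃ n, 1 - f n = 0
  · obtain ⟨n, hn⟩ := h
    exact ⟨0, by
      unfold HasProd
      apply Tendsto.congr' _ tendsto_const_nhds
      filter_upwards [Filter.eventually_ge_atTop ({n} : Finset ℕ)] with s hs
      exact (Finset.prod_eq_zero (hs (Finset.mem_singleton_self n)) hn).symm⟩
  · push_neg at h
    simpa [sub_eq_add_neg] using Complex.multipliable_one_add_of_summable hf.neg

lemma summable_geom_mul {q : ℂ} (x : ℂ) (hq : ‖q‖ < 1) :
    Summable (fun n : ℕ => q ^ (n + 1) * x) := by
  apply ((summable_geometric_of_norm_lt_one hq).mul_right (q * x)).congr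
  intro n
  rw [pow_succ]; ring

lemma summable_geom_real {a : ℝ} (C : ℝ) (h0 : 0 ≤ a) (ha : a < 1) :
    Summable (fun n : ℕ => C * a ^ (n + 1)) := by
  apply ((summable_geometric_of_lt_one h0 ha).mul_left (C * a)).congr
  intro n
  rw [pow_succ]; ring

lemma contAt_prod {q : ℂ} (hq : ‖q‖ < 1) :
    ContinuousAt (fun x : ℂ => ∏' l : ℕ, (1 - q ^ (l + 1) * x)) 1 := by
  by_cases hq0 : q = 0
  · have : (fun x : ℂ => ∏' l : ℕ, (1 - q ^ (l + 1) * x)) = fun _ => 1 := by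
      funext x; simp [hq0]
    rw [this]; exact continuousAt_const
  · have hqpos : 0 < ‖q‖ := norm_pos_iff.mpr hq0
    set R : ℝ := (1 + ‖q‖⁻¹) / 2 with hRdef
    have hinv : ‖q‖ * ‖q‖⁻¹ = 1 := mul_inv_cancel₀ (ne_of_gt hqpos)
    have hinvpos : 0 < ‖q‖⁻¹ := inv_pos.mpr hqpos
    have hinv1 : 1 < ‖q‖⁻¹ := by nlinarith
    have hR1 : 1 < R := by rw [hRdef]; linarith
    have hc : R * ‖q‖ < 1 := by rw [hRdef]; nlinarith
    have hcpos : 0 ≤ R * ‖q‖ := by positivity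
    set c : ℝ := R * ‖q‖ with hcdef
    set s : Set ℂ := Metric.ball (0 : ℂ) R with hsdef
    have hnorm : ∀ (l : ℕ) (x : ℂ), x ∈ s → ‖q ^ (l + 1) * x‖ ≤ R * ‖q‖ ^ (l + 1) := by
      intro l x hx
      have hx' : ‖x‖ < R := by simpa [hsdef, Metric.mem_ball, dist_zero_right] using hx
      rw [norm_mul, norm_pow]
      calc ‖q‖ ^ (l + 1) * ‖x‖ ≤ ‖q‖ ^ (l + 1) * R := by
            apply mul_le_mul_of_nonneg_left hx'.le (by positivity)
        _ = R * ‖q‖ ^ (l + 1) := by ring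
    have hnormc : ∀ (l : ℕ) (x : ℂ), x ∈ s → ‖q ^ (l + 1) * x‖ ≤ c := by
      intro l x hx
      refine (hnorm l x hx).trans ?_
      rw [hcdef]
      have : ‖q‖ ^ (l + 1) ≤ ‖q‖ ^ 1 := pow_le_pow_of_le_one (norm_nonneg q) hq.le (by omega)
      simp only [pow_one] at this
      nlinarith
    have hlt1 : ∀ (l : ℕ) (x : ℂ), x ∈ s → ‖q ^ (l + 1) * x‖ < 1 :=
      fun l x hx => lt_of_le_of_lt (hnormc l x hx) hc
    have hne : ∀ (l : ℕ) (x : ℂ), x ∈ s → 1 - q ^ (l + 1) * x ≠ 0 := by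
      intro l x hx h
      have := hlt1 l x hx
      rw [sub_eq_zero] at h
      rw [← h] at this
      simp at this
    have hslit : ∀ (l : ℕ) (x : ℂ), x ∈ s → 1 - q ^ (l + 1) * x ∈ Complex.slitPlane := by
      intro l x hx
      refine Complex.mem_slitPlane_iff.mpr (Or.inl ?_)
      have h1 : (q ^ (l + 1) * x).re ≤ ‖q ^ (l + 1) * x‖ :=
        (Complex.abs_re_le_norm _).trans' (le_abs_self _)
      have := hlt1 l x hx
      simp only [Complex.sub_re, Complex.one_re]
      linarith
    set M : ℕ → ℝ := fun l => (R * ‖q‖ ^ (l + 1)) ^ 2 * (1 - c)⁻¹ / 2 + R * ‖q‖ ^ (l + 1)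
      with hMdef
    have hMsum : Summable M := by
      apply Summable.add
      · apply (summable_geom_real (R ^ 2 * (1 - c)⁻¹ / 2) (a := ‖q‖ ^ 2) (by positivity)
          (by nlinarith)).congr
        intro n
        rw [← pow_mul]
        ring
      · exact summable_geom_real R (norm_nonneg q) hq
    have hbound : ∀ (l : ℕ) (x : ℂ), x ∈ s → ‖Complex.log (1 - q ^ (l + 1) * x)‖ ≤ M l := by
      intro l x hx
      have h1 := Complex.norm_log_one_add_le (z := -(q ^ (l + 1) * x))
        (by rw [norm_neg]; exact hlt1 l x hx)
      rw [← sub_eq_add_neg] at h1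
      refine h1.trans ?_
      rw [norm_neg, hMdef]
      have h2 := hnorm l x hx
      have h3 := hnormc l x hx
      have h4 : (1 - ‖q ^ (l + 1) * x‖)⁻¹ ≤ (1 - c)⁻¹ := by
        apply inv_anti₀ (by linarith)
        linarith
      have h5 : (0:ℝ) < (1 - c)⁻¹ := by
        apply inv_pos.mpr; linarith
      have h6 : ‖q ^ (l + 1) * x‖ ^ 2 * (1 - ‖q ^ (l + 1) * x‖)⁻¹ / 2 ≤
          (R * ‖q‖ ^ (l + 1)) ^ 2 * (1 - c)⁻¹ / 2 := by
        have h7 : ‖q ^ (l + 1) * x‖ ^ 2 ≤ (R * ‖q‖ ^ (l + 1)) ^ 2 :=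
          pow_le_pow_left₀ (norm_nonneg _) h2 2
        have h8 : ‖q ^ (l + 1) * x‖ ^ 2 * (1 - ‖q ^ (l + 1) * x‖)⁻¹ ≤
            (R * ‖q‖ ^ (l + 1)) ^ 2 * (1 - c)⁻¹ :=
          mul_le_mul h7 h4 (inv_nonneg.mpr (by linarith)) (by positivity)
        linarith
      linarith
    have hgcont : ContinuousOn (fun x : ℂ => ∑' l : ℕ, Complex.log (1 - q ^ (l + 1) * x)) s := by
      apply continuousOn_tsum (u := M) _ hMsum hbound
      intro l
      apply ContinuousOn.clog
      · fun_prop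
      · exact fun x hx => hslit l x hx
    have heq : ∀ x ∈ s, (∏' l : ℕ, (1 - q ^ (l + 1) * x)) =
        cexp (∑' l : ℕ, Complex.log (1 - q ^ (l + 1) * x)) := by
      intro x hx
      apply tprod_eq_cexp_tsum
      · exact fun n => (Complex.exp_log (hne n x hx)).symm
      · exact Summable.of_norm_bounded hMsum (fun l => hbound l x hx)
    have hmem : s ∈ 𝓝 (1 : ℂ) := by
      apply Metric.isOpen_ball.mem_nhds
      simpa [hsdef, Metric.mem_ball, dist_zero_right] using hR1
    have hcexp : ContinuousAt (fun x : ℂ =>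
        cexp (∑' l : ℕ, Complex.log (1 - q ^ (l + 1) * x))) 1 :=
      Complex.continuous_exp.continuousAt.comp (hgcont.continuousAt hmem)
    exact hcexp.congr ((Filter.eventuallyEq_of_mem hmem heq).symm)

/-- `G(y,q) = ∏_{k≥1} (1 - y q^{k-1})(1 - y⁻¹ q^k)/(1 - q^k)²`. -/
noncomputable def Gfun (y q : ℂ) : ℂ :=
  ∏' k : ℕ, (1 - y * q ^ k) * (1 - y⁻¹ * q ^ (k + 1)) / (1 - q ^ (k + 1)) ^ 2

/-- `exp(−πiz)·G(exp(2πiz), q) = 2πi·θ(−z,τ)/θ′(0,τ)` for `q = exp(2πiτ)`. -/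
theorem G_eq_theta_ratio (τ : ℂ) (hτ : 0 < τ.im) (z : ℂ) :
    Complex.exp (-((π : ℂ) * I * z)) *
        Gfun (Complex.exp (2 * (π : ℂ) * I * z)) (Complex.exp (2 * (π : ℂ) * I * τ)) =
      2 * (π : ℂ) * I * jacobiThetaProd (-z) τ / jacobiThetaProdDeriv τ := by
  set q : ℂ := Complex.exp (2 * (π : ℂ) * I * τ) with hqdef
  set u : ℂ := Complex.exp (2 * (π : ℂ) * I * z) with hudef
  have hq : ‖q‖ < 1 := by
    rw [hqdef, Complex.norm_exp, Real.exp_lt_one_iff]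
    have : (2 * (π : ℂ) * I * τ).re = -(2 * π * τ.im) := by
      simp [Complex.mul_re, Complex.mul_im]
    rw [this]
    have := Real.pi_pos
    nlinarith
  have hq0 : q ≠ 0 := Complex.exp_ne_zero _
  have hu0 : u ≠ 0 := Complex.exp_ne_zero _
  have hv1 : Complex.exp (2 * (π : ℂ) * I * (-z)) = u⁻¹ := by
    rw [hudef, ← Complex.exp_neg]
    congr 1; ring
  have hv2 : Complex.exp (-(2 * (π : ℂ) * I * (-z))) = u := by
    rw [hudef]; congr 1; ring
  by_cases hdeg : (∃ k : ℕ, 1 - u * q ^ k = 0) ∨ (∃ k : ℕ, 1 - u⁻¹ * q ^ (k + 1) = 0)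
  · -- degenerate case: both sides vanish
    have hG : Gfun u q = 0 := by
      unfold Gfun
      obtain (⟨k, hk⟩ | ⟨k, hk⟩) := hdeg
      · exact tprod_eq_zero_of_exists (i := k) (by rw [hk]; simp)
      · exact tprod_eq_zero_of_exists (i := k) (by rw [hk]; simp)
    have hθ : jacobiThetaProd (-z) τ = 0 := by
      unfold jacobiThetaProd
      rw [← hqdef, hv1, hv2]
      obtain (⟨k, hk⟩ | ⟨k, hk⟩) := hdeg
      · match k with
        | 0 =>
          have hk' : u = 1 := by
            rw [sub_eq_zero] at hk
            simpa using hk.symm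
          rw [hudef, Complex.exp_eq_one_iff] at hk'
          obtain ⟨n, hn⟩ := hk'
          have h2πI : (2 * (π : ℂ) * I) ≠ 0 := by
            simp [Complex.ofReal_ne_zero, Real.pi_ne_zero, Complex.I_ne_zero]
          have hz : z = (n : ℂ) := by
            have : z * (2 * (π : ℂ) * I) = (n : ℂ) * (2 * (π : ℂ) * I) := by
              rw [← hn]; ring
            exact mul_right_cancel₀ h2πI this
          have hsin : Complex.sin ((π : ℂ) * (-z)) = 0 := by
            apply Complex.sin_eq_zero_iff.mpr
            exact ⟨-n, by rw [hz]; push_cast; ring⟩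
          rw [hsin]; ring
        | (k' + 1) =>
          have : 1 - q ^ (k' + 1) * u = 0 := by rw [← hk]; ring
          rw [tprod_eq_zero_of_exists (i := k') (by rw [this]; simp)]
          ring
      · have : 1 - q ^ (k + 1) * u⁻¹ = 0 := by rw [← hk]; ring
        rw [tprod_eq_zero_of_exists (i := k) (by rw [this]; simp)]
        ring
    rw [hG, hθ]
    simp
  · -- main case
    push_neg at hdeg
    obtain ⟨hne1, hne2⟩ := hdeg
    have hne1u : 1 - u ≠ 0 := by simpa using hne1 0
    have hqk : ∀ k : ℕ, ‖q ^ (k + 1)‖ < 1 := by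
      intro k
      rw [norm_pow]
      calc ‖q‖ ^ (k + 1) ≤ ‖q‖ ^ 1 :=
            pow_le_pow_of_le_one (norm_nonneg q) hq.le (by omega)
        _ = ‖q‖ := pow_one _
        _ < 1 := hq
    have hne0 : ∀ k : ℕ, 1 - q ^ (k + 1) ≠ 0 := by
      intro k h
      rw [sub_eq_zero] at h
      have := hqk k
      rw [← h] at this; simp at this
    set la : ℕ → ℂ := fun k => Complex.log (1 - u * q ^ k) with hladef
    set lb : ℕ → ℂ := fun k => Complex.log (1 - u⁻¹ * q ^ (k + 1)) with hlbdef
    set lc : ℕ → ℂ := fun k => Complex.log (1 - q ^ (k + 1)) with hlcdef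
    have hsa : Summable la :=
      Summable.clog_one_sub ((summable_geometric_of_norm_lt_one hq).mul_left u)
    have hsb : Summable lb :=
      Summable.clog_one_sub ((summable_geom_mul u⁻¹ hq).congr (fun n => mul_comm _ _))
    have hsc : Summable lc :=
      Summable.clog_one_sub ((summable_geom_mul 1 hq).congr (fun n => by simp))
    have hsa' : Summable (fun k => la (k + 1)) := (summable_nat_add_iff 1).mpr hsa
    have hGfun : Gfun u q = Complex.exp (∑' k : ℕ, (la k + lb k - 2 * lc k)) := by
      unfold Gfun
      apply tprod_eq_cexp_tsum
      · intro n
        rw [hladef, hlbdef, hlcdef]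
        simp only
        rw [Complex.exp_sub, Complex.exp_add, two_mul, Complex.exp_add,
          Complex.exp_log (hne1 n), Complex.exp_log (hne2 n), Complex.exp_log (hne0 n), sq]
      · exact (hsa.add hsb).sub (hsc.mul_left 2)
    have hsumsplit : (∑' k : ℕ, (la k + lb k - 2 * lc k)) =
        (∑' k, la k) + (∑' k, lb k) - 2 * (∑' k, lc k) := by
      rw [Summable.tsum_sub (hsa.add hsb) (hsc.mul_left 2), Summable.tsum_add hsa hsb, tsum_mul_left]
    have hpeel : (∑' k, la k) = Complex.log (1 - u) + ∑' k, la (k + 1) := by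
      rw [Summable.tsum_eq_zero_add hsa]
      congr 1
      rw [hladef]; simp
    set T0 : ℂ := ∑' k, lc k with hT0
    set T1 : ℂ := ∑' k, la (k + 1) with hT1
    set T2 : ℂ := ∑' k, lb k with hT2
    -- theta value
    have hθval : jacobiThetaProd (-z) τ =
        Complex.exp ((π : ℂ) * I * τ / 4) * (2 * Complex.sin ((π : ℂ) * (-z))) *
          Complex.exp (T0 + T2 + T1) := by
      unfold jacobiThetaProd
      rw [← hqdef, hv1, hv2]
      congr 1
      rw [show T0 + T2 + T1 = ∑' l : ℕ, (lc l + lb l + la (l + 1)) by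
        rw [Summable.tsum_add (hsc.add hsb) hsa', Summable.tsum_add hsc hsb]]
      apply tprod_eq_cexp_tsum
      · intro n
        rw [hladef, hlbdef, hlcdef]
        simp only
        rw [Complex.exp_add, Complex.exp_add, Complex.exp_log (hne0 n),
          Complex.exp_log (hne2 n), Complex.exp_log (hne1 (n + 1))]
        rw [mul_comm u (q ^ (n + 1)), mul_comm u⁻¹ (q ^ (n + 1))]
      · exact (hsc.add hsb).add hsa'
    -- the derivative
    set B : ℂ → ℂ := fun x => ∏' l : ℕ, (1 - q ^ (l + 1) * x) with hBdef
    have hmulB : ∀ x : ℂ, Multipliable (fun l : ℕ => 1 - q ^ (l + 1) * x) :=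
      fun x => multipliable_one_sub (summable_geom_mul x hq)
    have hP : ∀ w : ℂ,
        (∏' l : ℕ, (1 - q ^ (l + 1)) * (1 - q ^ (l + 1) * Complex.exp (2 * (π : ℂ) * I * w)) *
          (1 - q ^ (l + 1) * Complex.exp (-(2 * (π : ℂ) * I * w)))) =
        B 1 * B (Complex.exp (2 * (π : ℂ) * I * w)) *
          B (Complex.exp (-(2 * (π : ℂ) * I * w))) := by
      intro w
      rw [hBdef]
      simp only
      rw [← Multipliable.tprod_mul (hmulB 1) (hmulB _), ← Multipliable.tprod_mul ((hmulB 1).mul (hmulB _)) (hmulB _)]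
      congr 1
      funext l
      ring
    have hPcont : ContinuousAt (fun w : ℂ => B 1 * B (Complex.exp (2 * (π : ℂ) * I * w)) *
        B (Complex.exp (-(2 * (π : ℂ) * I * w)))) 0 := by
      have hg1 : ContinuousAt (fun w : ℂ => Complex.exp (2 * (π : ℂ) * I * w)) 0 := by fun_prop
      have hg2 : ContinuousAt (fun w : ℂ => Complex.exp (-(2 * (π : ℂ) * I * w))) 0 := by fun_prop
      have he1 : Complex.exp (2 * (π : ℂ) * I * (0 : ℂ)) = 1 := by simp
      have he2 : Complex.exp (-(2 * (π : ℂ) * I * (0 : ℂ))) = 1 := by simp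
      have hB1 : ContinuousAt B 1 := contAt_prod hq
      refine (continuousAt_const.mul ?_).mul ?_
      · have h1 : ContinuousAt B ((fun w : ℂ => Complex.exp (2 * (π : ℂ) * I * w)) 0) := by
          simp only [he1]; exact hB1
        have h1c : ContinuousAt (B ∘ fun w : ℂ => Complex.exp (2 * (π : ℂ) * I * w)) 0 :=
          ContinuousAt.comp (x := (0:ℂ)) (f := fun w : ℂ => Complex.exp (2 * (π : ℂ) * I * w)) h1 hg1
        exact h1c
      · have h2 : ContinuousAt B ((fun w : ℂ => Complex.exp (-(2 * (π : ℂ) * I * w))) 0) := by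
          simp only [he2]; exact hB1
        have h2c : ContinuousAt (B ∘ fun w : ℂ => Complex.exp (-(2 * (π : ℂ) * I * w))) 0 :=
          ContinuousAt.comp (x := (0:ℂ)) (f := fun w : ℂ => Complex.exp (-(2 * (π : ℂ) * I * w))) h2 hg2
        exact h2c
    have hDer : HasDerivAt (fun w => jacobiThetaProd w τ)
        (Complex.exp ((π : ℂ) * I * τ / 4) * (2 * (π : ℂ)) * (B 1 * B 1 * B 1)) 0 := by
      rw [hasDerivAt_iff_tendsto_slope]
      have hsin : Tendsto (fun w : ℂ => Complex.sin ((π : ℂ) * w) / w) (𝓝[≠] (0:ℂ))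
          (𝓝 ((π : ℂ))) := by
        have hd : HasDerivAt (fun w : ℂ => Complex.sin ((π : ℂ) * w)) (π : ℂ) 0 := by
          have := (Complex.hasDerivAt_sin ((π : ℂ) * 0)).comp 0
            ((hasDerivAt_id (0 : ℂ)).const_mul (π : ℂ))
          simpa [Function.comp_def] using this
        rw [hasDerivAt_iff_tendsto_slope] at hd
        apply hd.congr
        intro w
        rw [slope_def_field]
        simp
      have hPt : Tendsto (fun w : ℂ => B 1 * B (Complex.exp (2 * (π : ℂ) * I * w)) *
          B (Complex.exp (-(2 * (π : ℂ) * I * w)))) (𝓝[≠] (0:ℂ)) (𝓝 (B 1 * B 1 * B 1)) := by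
        have h := hPcont.tendsto.mono_left (nhdsWithin_le_nhds (s := {(0:ℂ)}ᶜ))
        simpa using h
      have t1 : Tendsto (fun w : ℂ => Complex.exp ((π : ℂ) * I * τ / 4) * 2 *
          (Complex.sin ((π : ℂ) * w) / w) *
          (B 1 * B (Complex.exp (2 * (π : ℂ) * I * w)) *
            B (Complex.exp (-(2 * (π : ℂ) * I * w))))) (𝓝[≠] (0:ℂ))
          (𝓝 (Complex.exp ((π : ℂ) * I * τ / 4) * (2 * (π : ℂ)) * (B 1 * B 1 * B 1))) := by
        have := (tendsto_const_nhds (x := Complex.exp ((π : ℂ) * I * τ / 4) * 2)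
          (f := 𝓝[≠] (0:ℂ))).mul hsin |>.mul hPt
        convert this using 2
        ring
      apply t1.congr'
      filter_upwards [self_mem_nhdsWithin] with w hw
      have hw' : w ≠ 0 := hw
      rw [slope_def_field]
      unfold jacobiThetaProd
      rw [← hqdef, hP w]
      rw [show Complex.sin ((π : ℂ) * (0:ℂ)) = 0 by simp, mul_zero, mul_zero, zero_mul,
        sub_zero, sub_zero]
      rw [eq_div_iff hw']
      have hdm : Complex.sin ((π : ℂ) * w) / w * w = Complex.sin ((π : ℂ) * w) :=
        div_mul_cancel₀ _ hw'
      linear_combination (Complex.exp ((π : ℂ) * I * τ / 4) * 2 *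
        (B 1 * B (Complex.exp (2 * (π : ℂ) * I * w)) *
          B (Complex.exp (-(2 * (π : ℂ) * I * w))))) * hdm
    have hderiv : jacobiThetaProdDeriv τ =
        Complex.exp ((π : ℂ) * I * τ / 4) * (2 * (π : ℂ)) * (B 1 * B 1 * B 1) := by
      rw [jacobiThetaProdDeriv]
      exact hDer.deriv
    have hB1val : B 1 = Complex.exp T0 := by
      rw [hBdef, hT0]
      apply tprod_eq_cexp_tsum
      · intro n
        rw [hlcdef]
        simp only [mul_one]
        rw [Complex.exp_log (hne0 n)]
      · exact hsc
    -- key identity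
    have hkey : Complex.exp (-((π : ℂ) * I * z)) * (1 - u) =
        2 * I * Complex.sin ((π : ℂ) * (-z)) := by
      rw [show (π : ℂ) * (-z) = -((π : ℂ) * z) by ring, Complex.sin_neg, Complex.sin]
      have a1 : Complex.exp (-((π : ℂ) * I * z)) = Complex.exp (-((π : ℂ) * z) * I) := by
        congr 1; ring
      have a2 : Complex.exp (-((π : ℂ) * I * z)) * u = Complex.exp (((π : ℂ) * z) * I) := by
        rw [hudef, ← Complex.exp_add]; congr 1; ring
      rw [mul_sub, mul_one, a2, a1]
      linear_combination (Complex.exp (-((π : ℂ) * z) * I) - Complex.exp (((π : ℂ) * z) * I)) *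
        Complex.I_sq
    -- final computation
    rw [hGfun, hsumsplit, hpeel, hθval, hderiv, hB1val]
    have e1 : Complex.exp (Complex.log (1 - u) + T1 + T2 - 2 * T0) =
        (1 - u) * Complex.exp T1 * Complex.exp T2 / (Complex.exp T0 * Complex.exp T0) := by
      rw [show Complex.log (1 - u) + T1 + T2 - 2 * T0 =
        Complex.log (1 - u) + T1 + T2 - (T0 + T0) by ring,
        Complex.exp_sub, Complex.exp_add, Complex.exp_add, Complex.exp_add,
        Complex.exp_log hne1u]
    have e2 : Complex.exp (T0 + T2 + T1) =
        Complex.exp T0 * Complex.exp T2 * Complex.exp T1 := by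
      rw [Complex.exp_add, Complex.exp_add]
    have hπ0 : (π : ℂ) ≠ 0 := Complex.ofReal_ne_zero.mpr Real.pi_ne_zero
    have hexp0 : ∀ w : ℂ, Complex.exp w ≠ 0 := Complex.exp_ne_zero
    have hden : Complex.exp ((π : ℂ) * I * τ / 4) * (2 * (π : ℂ)) *
        (Complex.exp T0 * Complex.exp T0 * Complex.exp T0) ≠ 0 :=
      mul_ne_zero (mul_ne_zero (hexp0 _) (mul_ne_zero two_ne_zero hπ0))
        (mul_ne_zero (mul_ne_zero (hexp0 _) (hexp0 _)) (hexp0 _))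
    rw [e1, e2, mul_div_assoc', div_eq_div_iff (mul_ne_zero (hexp0 T0) (hexp0 T0)) hden]
    linear_combination (Complex.exp T1 * Complex.exp T2 *
      (Complex.exp ((π : ℂ) * I * τ / 4) * (2 * (π : ℂ)) *
        (Complex.exp T0 * Complex.exp T0 * Complex.exp T0))) * hkey
end

section
/- Let τ lie in the complex upper half-plane, q = exp(2πiτ), and let x, z ∈ ℂ satisfy x/(2πi) − z ∉ ℤ + τℤ. Then G(exp(x)·q, q) · G(exp(2πiz), q) / G(exp(x − 2πiz)·q, q) = 2πi · θ(x/(2πi), τ) · θ(−z, τ) / (θ(x/(2πi) − z, τ) · θ′(0, τ)). -/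
open Complex Real

namespace Gaux

noncomputable def Pi (q a : ℂ) : ℂ := ∏' l : ℕ, (1 - a * q ^ (l + 1))

variable {q : ℂ} (hq : ‖q‖ < 1)

lemma hasProd_zero_of_eq_zero {f : ℕ → ℂ} (l₀ : ℕ) (h : f l₀ = 0) : HasProd f 0 := by
  have hev : ∀ᶠ s : Finset ℕ in Filter.atTop, ∏ i ∈ s, f i = 0 := by
    refine Filter.eventually_atTop.2 ⟨{l₀}, fun s hs => Finset.prod_eq_zero ?_ h⟩
    exact hs (Finset.mem_singleton_self l₀)
  exact Filter.Tendsto.congr' (by filter_upwards [hev] with s hs using hs.symm)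
    tendsto_const_nhds

include hq in
lemma summable_log (a : ℂ) :
    Summable (fun l : ℕ => Complex.log (1 - a * q ^ (l + 1))) := by
  have hgeo : Summable (fun l : ℕ => 2 * ‖a‖ * ‖q‖ * ‖q‖ ^ l) :=
    (summable_geometric_of_lt_one (norm_nonneg q) hq).mul_left _
  refine Summable.of_norm_bounded_eventually_nat hgeo ?_
  have h0 : Filter.Tendsto (fun l : ℕ => ‖a‖ * ‖q‖ ^ (l + 1))
      Filter.atTop (nhds 0) := by
    have := ((tendsto_pow_atTop_nhds_zero_of_lt_one (norm_nonneg q) hq).const_mul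
      (‖a‖)).comp (Filter.tendsto_add_atTop_nat 1)
    simpa [Function.comp_def] using this
  have hev : ∀ᶠ l : ℕ in Filter.atTop, ‖a‖ * ‖q‖ ^ (l + 1) ≤ 1 / 2 :=
    h0.eventually_le_const (by norm_num)
  filter_upwards [hev] with l hl
  have habs : ‖-(a * q ^ (l + 1))‖ ≤ 1 / 2 := by
    simpa [norm_mul, norm_pow] using hl
  have hlog := Complex.norm_log_one_add_half_le_self (z := -(a * q ^ (l + 1))) (by
    simpa using habs)
  have : (1 : ℂ) + -(a * q ^ (l + 1)) = 1 - a * q ^ (l + 1) := by ring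
  rw [this] at hlog
  refine hlog.trans ?_
  have : ‖-(a * q ^ (l + 1))‖ = ‖a‖ * ‖q‖ ^ (l + 1) := by
    simp [norm_mul, norm_pow]
  rw [this]
  have hp : ‖q‖ ^ (l + 1) = ‖q‖ ^ l * ‖q‖ := pow_succ _ _
  nlinarith [norm_nonneg a, pow_nonneg (norm_nonneg q) l,
    norm_nonneg q, pow_nonneg (norm_nonneg q) (l+1)]

include hq in
lemma pi_eq_exp {a : ℂ} (hne : ∀ l : ℕ, 1 - a * q ^ (l + 1) ≠ 0) :
    Pi q a = Complex.exp (∑' l : ℕ, Complex.log (1 - a * q ^ (l + 1))) := by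
  have := Complex.cexp_tsum_eq_tprod (f := fun (l : ℕ) => 1 - a * q ^ (l + 1))
    hne (summable_log hq a)
  exact this.symm

include hq in
lemma pi_ne_zero {a : ℂ} (hne : ∀ l : ℕ, 1 - a * q ^ (l + 1) ≠ 0) : Pi q a ≠ 0 := by
  rw [pi_eq_exp hq hne]; exact Complex.exp_ne_zero _

include hq in
set_option maxHeartbeats 1000000 in
lemma mult (a : ℂ) : Multipliable (fun l : ℕ => 1 - a * q ^ (l + 1)) := by
  by_cases hne : ∀ l : ℕ, 1 - a * q ^ (l + 1) ≠ 0
  · exact Complex.multipliable_of_summable_log (f := fun (l : ℕ) => 1 - a * q ^ (l + 1))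
      (summable_log hq a)
  · push_neg at hne
    obtain ⟨l₀, h0⟩ := hne
    exact (hasProd_zero_of_eq_zero l₀ h0).multipliable

include hq in
lemma mult0 (a : ℂ) : Multipliable (fun k : ℕ => 1 - a * q ^ k) :=
 Multipliable.comp_nat_add (k := 1) (mult hq a)

include hq in
lemma tprod_shift (a : ℂ) : ∏' k : ℕ, (1 - a * q ^ k) = (1 - a) * Pi q a := by
  have := tprod_eq_zero_mul' (f := fun k : ℕ => 1 - a * q ^ k) (mult hq a)
  simpa [Pi] using this


lemma hasProd_inv' {f : ℕ → ℂ} {p : ℂ} (hp : p ≠ 0) (h : HasProd f p) :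
    HasProd (fun n => (f n)⁻¹) p⁻¹ := by
  exact h.inv₀ hp

include hq in
lemma one_sub_pow_ne (l : ℕ) : 1 - q ^ (l + 1) ≠ 0 := by
  intro hcon
  have h1 : q ^ (l + 1) = 1 := by linear_combination -hcon
  have : ‖q‖ ^ (l + 1) < 1 :=
    lt_of_le_of_lt (pow_le_of_le_one (norm_nonneg q) hq.le (Nat.succ_ne_zero l)) hq
  rw [← norm_pow, h1] at this
  simp at this

include hq in
lemma one_sub_one_pow_ne (l : ℕ) : 1 - 1 * q ^ (l + 1) ≠ 0 := by
  simpa using one_sub_pow_ne hq l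

include hq in
lemma P_ne : Pi q 1 ≠ 0 := pi_ne_zero hq (one_sub_one_pow_ne hq)

include hq in
lemma hasProd_P : HasProd (fun l : ℕ => 1 - q ^ (l + 1)) (Pi q 1) := by
  have h := (mult hq 1).hasProd
  simpa [Pi] using h

include hq in
lemma hasProd_Pinv : HasProd (fun l : ℕ => (1 - q ^ (l + 1))⁻¹) (Pi q 1)⁻¹ :=
  hasProd_inv' (P_ne hq) (hasProd_P hq)

include hq in
lemma gfun_eq (y : ℂ) :
    Gfun y q = (1 - y) * Pi q y * (Pi q y⁻¹ * ((Pi q 1)⁻¹ * (Pi q 1)⁻¹)) := by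
  have hterm : ∀ k : ℕ, (1 - y * q ^ k) * (1 - y⁻¹ * q ^ (k + 1)) / (1 - q ^ (k + 1)) ^ 2 =
      (1 - y * q ^ k) * ((1 - y⁻¹ * q ^ (k + 1)) *
        ((1 - q ^ (k + 1))⁻¹ * (1 - q ^ (k + 1))⁻¹)) := fun k => by
    rw [sq, div_eq_mul_inv, mul_inv]; ring
  have mC : Multipliable (fun k : ℕ => (1 - q ^ (k + 1))⁻¹ * (1 - q ^ (k + 1))⁻¹) :=
    ((hasProd_Pinv hq).mul (hasProd_Pinv hq)).multipliable
  rw [Gfun, tprod_congr hterm,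
    Multipliable.tprod_mul (mult0 hq y) ((mult hq y⁻¹).mul mC),
    Multipliable.tprod_mul (mult hq y⁻¹) mC,
    ((hasProd_Pinv hq).mul (hasProd_Pinv hq)).tprod_eq, tprod_shift hq y]
  rfl

include hq in
lemma gfun_eq2 (hq0 : q ≠ 0) (y : ℂ) :
    Gfun (y * q) q = Pi q y * ((1 - y⁻¹) * Pi q y⁻¹) * ((Pi q 1)⁻¹ * (Pi q 1)⁻¹) := by
  have hterm : ∀ k : ℕ,
      (1 - y * q * q ^ k) * (1 - (y * q)⁻¹ * q ^ (k + 1)) / (1 - q ^ (k + 1)) ^ 2 =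
      (1 - y * q ^ (k + 1)) * ((1 - y⁻¹ * q ^ k) *
        ((1 - q ^ (k + 1))⁻¹ * (1 - q ^ (k + 1))⁻¹)) := fun k => by
    have e1 : y * q * q ^ k = y * q ^ (k + 1) := by rw [pow_succ]; ring
    have e2 : (y * q)⁻¹ * q ^ (k + 1) = y⁻¹ * q ^ k := by
      rw [mul_inv, pow_succ, show y⁻¹ * q⁻¹ * (q ^ k * q) = y⁻¹ * q ^ k * (q⁻¹ * q) from by ring,
        inv_mul_cancel₀ hq0, mul_one]
    rw [e1, e2, sq, div_eq_mul_inv, mul_inv]; ring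
  have mC : Multipliable (fun k : ℕ => (1 - q ^ (k + 1))⁻¹ * (1 - q ^ (k + 1))⁻¹) :=
    ((hasProd_Pinv hq).mul (hasProd_Pinv hq)).multipliable
  rw [Gfun, tprod_congr hterm,
    Multipliable.tprod_mul (mult hq y) ((mult0 hq y⁻¹).mul mC),
    Multipliable.tprod_mul (mult0 hq y⁻¹) mC,
    ((hasProd_Pinv hq).mul (hasProd_Pinv hq)).tprod_eq, tprod_shift hq y⁻¹]
  rw [show (∏' (b : ℕ), (1 - y * q ^ (b + 1))) = Pi q y from rfl]; ring


lemma contPi (hq : ‖q‖ < 1) (hq0 : q ≠ 0) :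
    ContinuousAt (fun w : ℂ => Pi q w) 1 := by
  set c : ℝ := (1 + ‖q‖) / 2 with hc
  have habs0 : 0 < ‖q‖ := norm_pos_iff.mpr hq0
  have hcq : ‖q‖ < c := by rw [hc]; linarith
  have hc1 : c < 1 := by rw [hc]; linarith
  have hc0 : 0 < c := by positivity
  set r : ℝ := c / ‖q‖ with hr
  have hr1 : 1 < r := (one_lt_div habs0).2 hcq
  set s : Set ℂ := {w : ℂ | ‖w‖ < r} with hs
  have hbound : ∀ w ∈ s, ∀ l : ℕ, ‖w * q ^ (l + 1)‖ ≤ c * ‖q‖ ^ l := by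
    intro w hw l
    rw [norm_mul, norm_pow]
    calc ‖w‖ * ‖q‖ ^ (l + 1)
        ≤ r * ‖q‖ ^ (l + 1) :=
          mul_le_mul_of_nonneg_right (le_of_lt hw) (by positivity)
      _ = c * ‖q‖ ^ l := by
          rw [hr, pow_succ]; field_simp
  have hboundc : ∀ w ∈ s, ∀ l : ℕ, ‖w * q ^ (l + 1)‖ ≤ c := by
    intro w hw l
    refine (hbound w hw l).trans ?_
    have : ‖q‖ ^ l ≤ 1 := pow_le_one₀ habs0.le hq.le
    nlinarith
  have hfn : ∀ (w : ↥s) (l : ℕ), 1 - (w : ℂ) * q ^ (l + 1) ≠ 0 := by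
    intro w l hcon
    have h1 : (w : ℂ) * q ^ (l + 1) = 1 := by linear_combination -hcon
    have := hboundc w w.2 l
    rw [h1] at this
    simp at this
    linarith
  have hF : (fun w : ↥s => Complex.exp (∑' l : ℕ, Complex.log (1 - (w : ℂ) * q ^ (l + 1)))) =
      fun w : ↥s => ∏' l : ℕ, (1 - (w : ℂ) * q ^ (l + 1)) :=
    funext fun w => Complex.cexp_tsum_eq_tprod (hfn w) (summable_log hq _)
  set K : ℝ := 1 / (2 * (1 - c)) + 1 with hK
  have hK0 : 0 < K := by
    have h2 : 0 < 1 / (2 * (1 - c)) := by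
      apply one_div_pos.2; linarith
    rw [hK]; linarith
  have hcont : Continuous (fun w : ↥s => ∑' l : ℕ, Complex.log (1 - (w : ℂ) * q ^ (l + 1))) := by
    refine continuous_tsum (f := fun (l : ℕ) (w : ↥s) => Complex.log (1 - (w : ℂ) * q ^ (l + 1)))
      (fun l => ?_) (Summable.mul_left (K * c)
        (summable_geometric_of_lt_one habs0.le hq)) ?_
    · refine continuous_iff_continuousAt.2 fun w => ?_
      have hcontin : ContinuousAt (fun w : ↥s => 1 - (w : ℂ) * q ^ (l + 1)) w :=
        (continuous_const.sub (continuous_subtype_val.mul continuous_const)).continuousAt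
      refine (continuousAt_clog ?_).comp hcontin
      refine Complex.mem_slitPlane_iff.2 (Or.inl ?_)
      have h1 : ‖(w : ℂ) * q ^ (l + 1)‖ < 1 := lt_of_le_of_lt (hboundc w w.2 l) hc1
      have h2 : ((w : ℂ) * q ^ (l + 1)).re ≤ ‖(w : ℂ) * q ^ (l + 1)‖ :=
        (Complex.abs_re_le_norm _).trans' (le_abs_self _)
      simp only [Complex.sub_re, Complex.one_re]
      linarith
    · intro l w
      set t : ℝ := ‖(w : ℂ) * q ^ (l + 1)‖ with ht
      have ht0 : 0 ≤ t := norm_nonneg _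
      have htc : t ≤ c := hboundc w w.2 l
      have htb : t ≤ c * ‖q‖ ^ l := hbound w w.2 l
      have hlog := Complex.norm_log_one_add_le (z := -((w : ℂ) * q ^ (l + 1)))
        (by simpa [ht] using lt_of_le_of_lt htc hc1)
      have heq : (1 : ℂ) + -((w : ℂ) * q ^ (l + 1)) = 1 - (w : ℂ) * q ^ (l + 1) := by ring
      rw [heq] at hlog
      have hnorm : ‖-((w : ℂ) * q ^ (l + 1))‖ = t := by simp [ht]
      rw [hnorm] at hlog
      refine hlog.trans ?_
      have e0 : t ^ 2 * (1 - t)⁻¹ / 2 = t ^ 2 / (2 * (1 - t)) := by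
        rw [div_eq_mul_inv, div_eq_mul_inv, mul_inv]; ring
      have e1 : t ^ 2 / (2 * (1 - t)) ≤ t / (2 * (1 - c)) := by
        refine div_le_div₀ ht0 (by nlinarith) (by linarith) (by linarith)
      rw [e0]
      calc t ^ 2 / (2 * (1 - t)) + t ≤ t / (2 * (1 - c)) + t := by linarith
        _ = K * t := by rw [hK, div_eq_mul_inv, one_div]; ring
        _ ≤ K * c * ‖q‖ ^ l := by nlinarith
  have hFcont : Continuous (fun w : ↥s => ∏' l : ℕ, (1 - (w : ℂ) * q ^ (l + 1))) := by
    rw [← hF]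
    exact Complex.continuous_exp.comp hcont
  have hopen : IsOpen s := isOpen_lt continuous_norm continuous_const
  have h1s : (1 : ℂ) ∈ s := by
    show ‖1‖ < r
    rw [norm_one]; linarith
  have hCO : ContinuousOn (fun w : ℂ => Pi q w) s :=
    continuousOn_iff_continuous_restrict.2 hFcont
  exact hCO.continuousAt (hopen.mem_nhds h1s)


lemma abs_q_lt (τ : ℂ) (hτ : 0 < τ.im) : ‖Complex.exp (2 * (π : ℂ) * I * τ)‖ < 1 := by
  rw [Complex.norm_exp]
  have hre : (2 * (π : ℂ) * I * τ).re = -(2 * π * τ.im) := by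
    simp [Complex.mul_re, Complex.mul_im, Complex.I_re, Complex.I_im]
    try ring
  rw [hre, Real.exp_lt_one_iff]
  have := Real.pi_pos
  nlinarith

lemma thetaEq (τ w : ℂ) (hτ : 0 < τ.im) :
    jacobiThetaProd w τ =
      Complex.exp ((π : ℂ) * I * τ / 4) * (2 * Complex.sin ((π : ℂ) * w)) *
        (Pi (Complex.exp (2 * (π : ℂ) * I * τ)) 1 *
          (Pi (Complex.exp (2 * (π : ℂ) * I * τ)) (Complex.exp (2 * (π : ℂ) * I * w)) *
           Pi (Complex.exp (2 * (π : ℂ) * I * τ)) (Complex.exp (-(2 * (π : ℂ) * I * w))))) := by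
  set q : ℂ := Complex.exp (2 * (π : ℂ) * I * τ) with hqdef
  have hq : ‖q‖ < 1 := abs_q_lt τ hτ
  rw [jacobiThetaProd]
  congr 1
  have hterm : ∀ l : ℕ,
      (1 - q ^ (l + 1)) * (1 - q ^ (l + 1) * Complex.exp (2 * (π : ℂ) * I * w)) *
        (1 - q ^ (l + 1) * Complex.exp (-(2 * (π : ℂ) * I * w))) =
      (1 - 1 * q ^ (l + 1)) * ((1 - Complex.exp (2 * (π : ℂ) * I * w) * q ^ (l + 1)) *
        (1 - Complex.exp (-(2 * (π : ℂ) * I * w)) * q ^ (l + 1))) := fun l => by ring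
  rw [tprod_congr hterm,
    Multipliable.tprod_mul (mult hq 1) ((mult hq _).mul (mult hq _)),
    Multipliable.tprod_mul (mult hq _) (mult hq _)]
  rfl

lemma hasDerivAt_mul_of_continuousAt {f g : ℂ → ℂ} {a : ℂ} (hf : HasDerivAt f a 0)
    (h0 : f 0 = 0) (hg : ContinuousAt g 0) :
    HasDerivAt (fun z => f z * g z) (a * g 0) 0 := by
  rw [hasDerivAt_iff_tendsto_slope] at hf ⊢
  have hfg : slope (fun z => f z * g z) 0 = fun z => slope f 0 z * g z := by
    funext y
    simp only [slope_def_field, h0, sub_zero, mul_zero, zero_mul]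
    ring
  rw [hfg]
  exact hf.mul (hg.tendsto.mono_left nhdsWithin_le_nhds)

lemma hasDerivAt_two_sin : HasDerivAt (fun z : ℂ => 2 * Complex.sin ((π : ℂ) * z))
    (2 * (π : ℂ)) 0 := by
  have h1 : HasDerivAt (fun z : ℂ => (π : ℂ) * z) (π : ℂ) 0 := by
    simpa using (hasDerivAt_id (0 : ℂ)).const_mul ((π : ℂ))
  have h2 : HasDerivAt Complex.sin (Complex.cos ((π : ℂ) * 0)) ((π : ℂ) * 0) :=
    Complex.hasDerivAt_sin _
  have h3 := (h2.comp 0 h1).const_mul (2 : ℂ)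
  have : (2 : ℂ) * (Complex.cos ((π : ℂ) * 0) * (π : ℂ)) = 2 * (π : ℂ) := by
    simp
  rw [this] at h3
  exact h3

lemma derivEq (τ : ℂ) (hτ : 0 < τ.im) :
    jacobiThetaProdDeriv τ =
      Complex.exp ((π : ℂ) * I * τ / 4) * (2 * (π : ℂ)) *
        (Pi (Complex.exp (2 * (π : ℂ) * I * τ)) 1 * (Pi (Complex.exp (2 * (π : ℂ) * I * τ)) 1 *
          Pi (Complex.exp (2 * (π : ℂ) * I * τ)) 1)) := by
  set q : ℂ := Complex.exp (2 * (π : ℂ) * I * τ) with hqdef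
  have hq : ‖q‖ < 1 := abs_q_lt τ hτ
  have hq0 : q ≠ 0 := Complex.exp_ne_zero _
  set c₀ : ℂ := Complex.exp ((π : ℂ) * I * τ / 4) with hc₀
  set g : ℂ → ℂ := fun z => Pi q (Complex.exp (2 * (π : ℂ) * I * z)) *
    Pi q (Complex.exp (-(2 * (π : ℂ) * I * z))) with hg
  have hfun : (fun z => jacobiThetaProd z τ) =
      fun z => (c₀ * Pi q 1) * ((2 * Complex.sin ((π : ℂ) * z)) * g z) := by
    funext z
    rw [thetaEq τ z hτ]
    simp only [hg]
    ring
  have hgc : ContinuousAt g 0 := by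
    have he : ContinuousAt (fun z : ℂ => Complex.exp (2 * (π : ℂ) * I * z)) 0 :=
      (Complex.continuous_exp.comp (continuous_const.mul continuous_id)).continuousAt
    have he' : ContinuousAt (fun z : ℂ => Complex.exp (-(2 * (π : ℂ) * I * z))) 0 := by
      have : ContinuousAt (fun z : ℂ => -(2 * (π : ℂ) * I * z)) 0 :=
        ((continuous_const.mul continuous_id).neg).continuousAt
      exact Complex.continuous_exp.continuousAt.comp this
    have h1 : Complex.exp (2 * (π : ℂ) * I * (0 : ℂ)) = 1 := by simp
    have h2 : Complex.exp (-(2 * (π : ℂ) * I * (0 : ℂ))) = 1 := by simp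
    have c1 : ContinuousAt (fun z : ℂ => Pi q (Complex.exp (2 * (π : ℂ) * I * z))) 0 := by
      have hcomp := ContinuousAt.comp (g := fun w : ℂ => Pi q w)
        (f := fun z : ℂ => Complex.exp (2 * (π : ℂ) * I * z)) (x := (0 : ℂ))
        (by simpa using contPi hq hq0) he
      exact hcomp
    have c2 : ContinuousAt (fun z : ℂ => Pi q (Complex.exp (-(2 * (π : ℂ) * I * z)))) 0 := by
      have hcomp := ContinuousAt.comp (g := fun w : ℂ => Pi q w)
        (f := fun z : ℂ => Complex.exp (-(2 * (π : ℂ) * I * z))) (x := (0 : ℂ))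
        (by simpa using contPi hq hq0) he'
      exact hcomp
    exact c1.mul c2
  have hg0 : g 0 = Pi q 1 * Pi q 1 := by
    simp only [hg, mul_zero, neg_zero, Complex.exp_zero]
  have hder : HasDerivAt (fun z => (2 * Complex.sin ((π : ℂ) * z)) * g z)
      ((2 * (π : ℂ)) * g 0) 0 :=
    hasDerivAt_mul_of_continuousAt hasDerivAt_two_sin (by simp) hgc
  have hder2 := hder.const_mul (c₀ * Pi q 1)
  rw [jacobiThetaProdDeriv, hfun, hder2.deriv, hg0]
  ring

lemma two_pi_I_ne : (2 * (π : ℂ) * I) ≠ 0 := by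
  simp [Real.pi_ne_zero, Complex.I_ne_zero, Complex.ofReal_ne_zero]

lemma sin_exp (w : ℂ) : Complex.sin w = (Complex.exp (w * I) - Complex.exp (-(w * I))) / (2 * I) := by
  have h1 := Complex.exp_mul_I (x := w)
  have h2 := Complex.exp_mul_I (x := -w)
  have e : -w * I = -(w * I) := by ring
  rw [e] at h2
  rw [h1, h2, Complex.cos_neg, Complex.sin_neg]
  field_simp
  ring

theorem key (x z : ℂ) :
    (1 - (Complex.exp x)⁻¹) * (1 - Complex.exp (2 * (π : ℂ) * I * z)) *
      Complex.sin ((π : ℂ) * (x / (2 * (π : ℂ) * I) - z)) =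
    -(2 * I) * Complex.sin ((π : ℂ) * (x / (2 * (π : ℂ) * I))) * Complex.sin ((π : ℂ) * z) *
      (1 - (Complex.exp (x - 2 * (π : ℂ) * I * z))⁻¹) := by
  set u : ℂ := x / (2 * (π : ℂ) * I) with hu
  have hxu : 2 * (π : ℂ) * I * u = x := by
    rw [hu, mul_comm, div_mul_cancel₀ x two_pi_I_ne]
  set A : ℂ := Complex.exp (x / 2) with hA
  set B : ℂ := Complex.exp ((π : ℂ) * z * I) with hB
  have hA0 : A ≠ 0 := Complex.exp_ne_zero _
  have hB0 : B ≠ 0 := Complex.exp_ne_zero _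
  have e1 : Complex.exp x = A * A := by
    rw [hA, ← Complex.exp_add]; congr 1; ring
  have e2 : Complex.exp (2 * (π : ℂ) * I * z) = B * B := by
    rw [hB, ← Complex.exp_add]; congr 1; ring
  have e3 : Complex.exp (x - 2 * (π : ℂ) * I * z) = A * A * (B * B)⁻¹ := by
    rw [Complex.exp_sub, e1, e2, div_eq_mul_inv]
  have s1 : Complex.sin ((π : ℂ) * u) = (A * A - 1) / (2 * I * A) := by
    have harg : (π : ℂ) * u * I = x / 2 := by linear_combination (1 / 2 : ℂ) * hxu
    rw [sin_exp, harg, Complex.exp_neg]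
    rw [div_eq_div_iff (by simp [Complex.I_ne_zero]) (by simp [hA0, Complex.I_ne_zero])]
    field_simp
    ring
  have s2 : Complex.sin ((π : ℂ) * z) = (B * B - 1) / (2 * I * B) := by
    rw [sin_exp, Complex.exp_neg]
    rw [div_eq_div_iff (by simp [Complex.I_ne_zero]) (by simp [hB0, Complex.I_ne_zero])]
    field_simp
    ring
  have s3 : Complex.sin ((π : ℂ) * (u - z)) = (A * A - B * B) / (2 * I * A * B) := by
    have harg : (π : ℂ) * (u - z) * I = x / 2 - (π : ℂ) * z * I := by
      linear_combination (1 / 2 : ℂ) * hxu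
    have g1 : Complex.exp (x / 2 - (π : ℂ) * z * I) = A / B := by rw [Complex.exp_sub]
    have g2 : Complex.exp ((π : ℂ) * z * I - x / 2) = B / A := by rw [Complex.exp_sub]
    rw [sin_exp, harg,
      show -(x / 2 - (π : ℂ) * z * I) = (π : ℂ) * z * I - x / 2 from by ring,
      g1, g2]
    rw [div_sub_div _ _ hB0 hA0, div_div,
      div_eq_div_iff (by simp [hA0, hB0]) (by simp [hA0, hB0, Complex.I_ne_zero])]
    ring
  have f1 : 1 - (A * A)⁻¹ = (A * A - 1) / (A * A) := by
    field_simp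
  have f3 : 1 - (A * A * (B * B)⁻¹)⁻¹ = (A * A - B * B) / (A * A) := by
    rw [mul_inv, inv_inv]
    field_simp
  rw [s1, s2, s3, e1, e2, e3, f1, f3]
  clear_value A B
  have hII : (I : ℂ) * I⁻¹ = 1 := mul_inv_cancel₀ Complex.I_ne_zero
  field_simp
  ring



end Gaux

set_option maxHeartbeats 3000000 in
/-- `G(e^x q, q)·G(e^{2πiz}, q)/G(e^{x−2πiz} q, q)
      = 2πi·θ(x/(2πi),τ)·θ(−z,τ)/(θ(x/(2πi)−z,τ)·θ′(0,τ))`. -/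
theorem G_ratio_eq_theta_ratio (τ : ℂ) (hτ : 0 < τ.im) (x z : ℂ)
    (h : ¬∃ m n : ℤ, x / (2 * (π : ℂ) * I) - z = (m : ℂ) + (n : ℂ) * τ) :
    Gfun (Complex.exp x * Complex.exp (2 * (π : ℂ) * I * τ))
        (Complex.exp (2 * (π : ℂ) * I * τ)) *
      Gfun (Complex.exp (2 * (π : ℂ) * I * z)) (Complex.exp (2 * (π : ℂ) * I * τ)) /
      Gfun (Complex.exp (x - 2 * (π : ℂ) * I * z) * Complex.exp (2 * (π : ℂ) * I * τ))
        (Complex.exp (2 * (π : ℂ) * I * τ)) =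
      2 * (π : ℂ) * I * jacobiThetaProd (x / (2 * (π : ℂ) * I)) τ * jacobiThetaProd (-z) τ /
        (jacobiThetaProd (x / (2 * (π : ℂ) * I) - z) τ * jacobiThetaProdDeriv τ) := by
  set q : ℂ := Complex.exp (2 * (π : ℂ) * I * τ) with hqdef
  have hq : ‖q‖ < 1 := Gaux.abs_q_lt τ hτ
  have hq0 : q ≠ 0 := Complex.exp_ne_zero _
  have hxu : 2 * (π : ℂ) * I * (x / (2 * (π : ℂ) * I)) = x := by
    rw [mul_comm, div_mul_cancel₀ x Gaux.two_pi_I_ne]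
  rw [Gaux.gfun_eq2 hq hq0 (Complex.exp x), Gaux.gfun_eq hq (Complex.exp (2 * (π : ℂ) * I * z)),
    Gaux.gfun_eq2 hq hq0 (Complex.exp (x - 2 * (π : ℂ) * I * z)),
    Gaux.thetaEq τ (x / (2 * (π : ℂ) * I)) hτ, Gaux.thetaEq τ (-z) hτ,
    Gaux.thetaEq τ (x / (2 * (π : ℂ) * I) - z) hτ, Gaux.derivEq τ hτ, ← hqdef]
  rw [hxu, Complex.exp_neg x]
  rw [show 2 * (π : ℂ) * I * -z = -(2 * (π : ℂ) * I * z) from by ring]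
  rw [show -(-(2 * (π : ℂ) * I * z)) = 2 * (π : ℂ) * I * z from by ring]
  rw [Complex.exp_neg (2 * (π : ℂ) * I * z)]
  rw [show 2 * (π : ℂ) * I * (x / (2 * (π : ℂ) * I) - z) = x - 2 * (π : ℂ) * I * z from by
    rw [mul_sub, hxu]]
  rw [Complex.exp_neg (x - 2 * (π : ℂ) * I * z)]
  rw [show (π : ℂ) * -z = -((π : ℂ) * z) from by ring, Complex.sin_neg]
  have hpi : (π : ℂ) ≠ 0 := Complex.ofReal_ne_zero.2 Real.pi_ne_zero
  have hmain : ∀ (w : ℂ) (l : ℕ), 1 - Complex.exp w * q ^ (l + 1) = 0 →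
      ∃ n : ℤ, w + ((l : ℂ) + 1) * (2 * (π : ℂ) * I * τ) = (n : ℂ) * (2 * (π : ℂ) * I) := by
    intro w l hl
    have h1 : Complex.exp (w + ((l : ℕ) + 1 : ℕ) * (2 * (π : ℂ) * I * τ)) = 1 := by
      rw [Complex.exp_add, Complex.exp_nat_mul, ← hqdef]
      linear_combination -hl
    obtain ⟨n, hn⟩ := Complex.exp_eq_one_iff.1 h1
    refine ⟨n, ?_⟩
    push_cast at hn
    linear_combination hn
  have hC : Gaux.Pi q (Complex.exp (x - 2 * (π : ℂ) * I * z)) ≠ 0 := by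
    refine Gaux.pi_ne_zero hq (fun l => ?_)
    intro hl
    obtain ⟨n, hn⟩ := hmain _ l hl
    refine h ⟨n, -((l : ℤ) + 1), ?_⟩
    refine mul_left_cancel₀ Gaux.two_pi_I_ne ?_
    rw [mul_sub, hxu]
    push_cast
    linear_combination hn
  have hC' : Gaux.Pi q (Complex.exp (x - 2 * (π : ℂ) * I * z))⁻¹ ≠ 0 := by
    refine Gaux.pi_ne_zero hq (fun l => ?_)
    intro hl
    rw [← Complex.exp_neg] at hl
    obtain ⟨n, hn⟩ := hmain _ l hl
    refine h ⟨-n, (l : ℤ) + 1, ?_⟩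
    refine mul_left_cancel₀ Gaux.two_pi_I_ne ?_
    rw [mul_sub, hxu]
    push_cast
    linear_combination -hn
  have hw3ne : 1 - (Complex.exp (x - 2 * (π : ℂ) * I * z))⁻¹ ≠ 0 := by
    intro hcon
    have h1 : (Complex.exp (x - 2 * (π : ℂ) * I * z))⁻¹ = 1 := by linear_combination -hcon
    rw [inv_eq_one] at h1
    obtain ⟨n, hn⟩ := Complex.exp_eq_one_iff.1 h1
    refine h ⟨n, 0, ?_⟩
    refine mul_left_cancel₀ Gaux.two_pi_I_ne ?_
    rw [mul_sub, hxu]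
    push_cast
    linear_combination hn
  have hs3 : Complex.sin ((π : ℂ) * (x / (2 * (π : ℂ) * I) - z)) ≠ 0 := by
    intro hcon
    obtain ⟨k, hk⟩ := Complex.sin_eq_zero_iff.1 hcon
    refine h ⟨k, 0, ?_⟩
    refine mul_left_cancel₀ hpi ?_
    push_cast
    linear_combination hk
  have hP : Gaux.Pi q 1 ≠ 0 := Gaux.P_ne hq
  have hc0 : Complex.exp ((π : ℂ) * I * τ / 4) ≠ 0 := Complex.exp_ne_zero _
  have hkey := Gaux.key x z
  set w1 : ℂ := Complex.exp x with hw1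
  set w2 : ℂ := Complex.exp (2 * (π : ℂ) * I * z) with hw2
  set w3 : ℂ := Complex.exp (x - 2 * (π : ℂ) * I * z) with hw3
  set A : ℂ := Gaux.Pi q w1 with hA
  set A' : ℂ := Gaux.Pi q w1⁻¹ with hA'
  set B : ℂ := Gaux.Pi q w2 with hB
  set B' : ℂ := Gaux.Pi q w2⁻¹ with hB'
  set Cc : ℂ := Gaux.Pi q w3 with hCc
  set C' : ℂ := Gaux.Pi q w3⁻¹ with hC'2
  set P : ℂ := Gaux.Pi q 1 with hPP
  set c0 : ℂ := Complex.exp ((π : ℂ) * I * τ / 4) with hc02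
  set s1 : ℂ := Complex.sin ((π : ℂ) * (x / (2 * (π : ℂ) * I))) with hs1
  set s2 : ℂ := Complex.sin ((π : ℂ) * z) with hs2
  set s3 : ℂ := Complex.sin ((π : ℂ) * (x / (2 * (π : ℂ) * I) - z)) with hs32
  clear_value w1 w2 w3 A A' B B' Cc C' P c0 s1 s2 s3
  field_simp
  rw [div_eq_iff (by rw [one_div]; exact hw3ne)]
  simp only [one_div]
  linear_combination (A * A' * B * B') * hkey
end

section
/- Let τ lie in the complex upper half-plane and z ∈ ℂ. Let r, s be nonnegative integers, n_1, …, n_r and f_1, …, f_s complex numbers, α_1, …, α_s real numbers, β_1, …, β_s nonnegative integers, and set α̃ := r − 1 + ∑_{k=1}^s α_k·β_k. Define F(t) := [θ(t/(2πi) − (α̃+1)z, τ)/θ(t/(2πi), τ)] · ∏_{l=1}^r [θ((n_l − t)/(2πi) − z, τ)/θ((n_l − t)/(2πi), τ)] · ∏_{k=1}^s [θ((f_k − β_k·t)/(2πi) − (α_k+1)z, τ)/θ((f_k − β_k·t)/(2πi) − z, τ)]. Then for every t ∈ ℂ at which all theta values appearing in the denominators of F(t), F(t + 2πi) and F(t +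 2πiτ) are nonzero, one has F(t + 2πi) = F(t) and F(t + 2πiτ) = F(t); that is, F is elliptic with respect to the lattice 2πi(ℤ + τℤ). -/
open Complex Real Filter

section helpers
lemma my_tprod_eq_zero {f : ℕ → ℂ} (i : ℕ) (h : f i = 0) : ∏' n, f n = 0 := by
  have : HasProd f 0 := by
    have hev : ∀ᶠ s : Finset ℕ in atTop, ∏ b ∈ s, f b = 0 := by
      filter_upwards [Filter.eventually_ge_atTop {i}] with s hs
      exact Finset.prod_eq_zero (hs (Finset.mem_singleton_self i)) h
    exact tendsto_const_nhds.congr' (hev.mono fun s hs => hs.symm)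
  exact this.tprod_eq

lemma my_sin_pi_eq_zero {w : ℂ} (h : Complex.exp (2*(π:ℂ)*I*w) = 1) :
    Complex.sin ((π:ℂ)*w) = 0 := by
  have haa : Complex.exp ((π:ℂ)*w*I) * Complex.exp ((π:ℂ)*w*I) = 1 := by
    rw [← Complex.exp_add, ← h]; ring_nf
  have hinv : Complex.exp (-((π:ℂ)*w)*I) = Complex.exp ((π:ℂ)*w*I) := by
    rw [show -((π:ℂ)*w)*I = -((π:ℂ)*w*I) by ring, Complex.exp_neg,
      inv_eq_of_mul_eq_one_right haa]
  rw [Complex.sin, hinv, sub_self, zero_mul, zero_div]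

set_option maxHeartbeats 1000000 in
lemma my_multipliable (q c : ℂ) (hq : ‖q‖ < 1) (hc : ∀ l : ℕ, 1 - q^(l+1)*c ≠ 0) :
    Multipliable (fun l : ℕ => 1 - q^(l+1)*c) := by
  refine Complex.multipliable_of_summable_log ?_
  apply Summable.of_norm
  have hten : Tendsto (fun l : ℕ => ‖q^(l+1)*c‖) atTop (nhds 0) := by
    have := (tendsto_pow_atTop_nhds_zero_of_norm_lt_one hq).norm
    simp only [norm_zero] at this
    have h2 : Tendsto (fun l : ℕ => ‖q^(l+1)‖ * ‖c‖) atTop (nhds (0 * ‖c‖)) :=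
      ((this.comp (tendsto_add_atTop_nat 1))).mul_const ‖c‖
    simpa [norm_mul] using h2
  obtain ⟨N, hN⟩ := (hten.eventually (eventually_le_nhds (by norm_num : (0:ℝ) < 1/2))).exists_forall_of_atTop
  rw [← summable_nat_add_iff N]
  have hb : ∀ l : ℕ, ‖Complex.log (1 - q^(l+N+1)*c)‖ ≤ (3/2) * ‖q^(l+N+1)*c‖ := by
    intro l
    have h1 : ‖-(q^(l+N+1)*c)‖ ≤ 1/2 := by
      rw [norm_neg]
      have := hN (l+N) (by omega)
      simpa using this
    have h2 := Complex.norm_log_one_add_half_le_self h1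
    rw [show (1:ℂ) + -(q^(l+N+1)*c) = 1 - q^(l+N+1)*c by ring, norm_neg] at h2
    exact h2
  have hbs : Summable (fun l : ℕ => (3/2) * ‖q^(l+N+1)*c‖) := by
    apply Summable.mul_left
    have hgeo : Summable (fun l : ℕ => ‖c‖ * ‖q‖^(l+(N+1))) :=
      ((summable_geometric_of_lt_one (norm_nonneg q) hq).comp_injective
        (add_left_injective (N+1))).mul_left ‖c‖
    apply hgeo.congr
    intro l
    rw [norm_mul, norm_pow, show l+N+1 = l+(N+1) by omega]
    ring
  exact Summable.of_nonneg_of_le (fun l => norm_nonneg _) hb hbs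

-- the key exponential/sine identity
lemma my_sin_key (z τ : ℂ) :
    2 * Complex.sin ((π:ℂ)*(z+τ)) * (1 - Complex.exp (-(2*(π:ℂ)*I*z))) =
      -Complex.exp (-((π:ℂ)*I*τ) - 2*(π:ℂ)*I*z) * (2 * Complex.sin ((π:ℂ)*z)) *
        (1 - Complex.exp (2*(π:ℂ)*I*τ) * Complex.exp (2*(π:ℂ)*I*z)) := by
  have hs := Complex.exp_ne_zero ((π:ℂ)*I*z)
  have hw := Complex.exp_ne_zero ((π:ℂ)*I*τ)
  set s := Complex.exp ((π:ℂ)*I*z) with hsdef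
  set w := Complex.exp ((π:ℂ)*I*τ) with hwdef
  have e1 : Complex.exp (-((π:ℂ)*(z+τ))*I) = (s*w)⁻¹ := by
    rw [show -((π:ℂ)*(z+τ))*I = -((π:ℂ)*I*z + (π:ℂ)*I*τ) by ring, Complex.exp_neg,
      Complex.exp_add]
  have e2 : Complex.exp (((π:ℂ)*(z+τ))*I) = s*w := by
    rw [show ((π:ℂ)*(z+τ))*I = (π:ℂ)*I*z + (π:ℂ)*I*τ by ring, Complex.exp_add]
  have e3 : Complex.exp (-(2*(π:ℂ)*I*z)) = (s*s)⁻¹ := by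
    rw [show -(2*(π:ℂ)*I*z) = -((π:ℂ)*I*z + (π:ℂ)*I*z) by ring, Complex.exp_neg,
      Complex.exp_add]
  have e4 : Complex.exp (-((π:ℂ)*I*τ) - 2*(π:ℂ)*I*z) = (w*(s*s))⁻¹ := by
    rw [show -((π:ℂ)*I*τ) - 2*(π:ℂ)*I*z = -((π:ℂ)*I*τ + ((π:ℂ)*I*z + (π:ℂ)*I*z)) by ring,
      Complex.exp_neg, Complex.exp_add, Complex.exp_add]
  have e5 : Complex.exp (-((π:ℂ)*z)*I) = s⁻¹ := by
    rw [show -((π:ℂ)*z)*I = -((π:ℂ)*I*z) by ring, Complex.exp_neg]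
  have e6 : Complex.exp (((π:ℂ)*z)*I) = s := by
    rw [show ((π:ℂ)*z)*I = (π:ℂ)*I*z by ring]
  have e7 : Complex.exp (2*(π:ℂ)*I*τ) = w*w := by
    rw [show 2*(π:ℂ)*I*τ = (π:ℂ)*I*τ + (π:ℂ)*I*τ by ring, Complex.exp_add]
  have e8 : Complex.exp (2*(π:ℂ)*I*z) = s*s := by
    rw [show 2*(π:ℂ)*I*z = (π:ℂ)*I*z + (π:ℂ)*I*z by ring, Complex.exp_add]
  rw [Complex.sin, Complex.sin, e1, e2, e3, e4, e5, e6, e7, e8]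
  field_simp
  ring

lemma J_add_one (z τ : ℂ) : jacobiThetaProd (z + 1) τ = - jacobiThetaProd z τ := by
  unfold jacobiThetaProd
  have h1 : Complex.sin ((π:ℂ)*(z+1)) = -Complex.sin ((π:ℂ)*z) := by
    rw [show (π:ℂ)*(z+1) = π*z + π by ring, Complex.sin_add_pi]
  have h2 : Complex.exp (2*(π:ℂ)*I*(z+1)) = Complex.exp (2*(π:ℂ)*I*z) := by
    rw [show (2:ℂ)*π*I*(z+1) = 2*π*I*z + 2*π*I by ring, Complex.exp_add,
      Complex.exp_two_pi_mul_I, mul_one]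
  have h3 : Complex.exp (-(2*(π:ℂ)*I*(z+1))) = Complex.exp (-(2*(π:ℂ)*I*z)) := by
    rw [show -((2:ℂ)*π*I*(z+1)) = -(2*π*I*z) + -(2*π*I) by ring, Complex.exp_add]
    simp [Complex.exp_neg, Complex.exp_two_pi_mul_I]
  rw [h1, h2, h3]; ring

lemma J_sub_one (z τ : ℂ) : jacobiThetaProd (z - 1) τ = - jacobiThetaProd z τ := by
  have := J_add_one (z - 1) τ
  rw [sub_add_cancel] at this
  rw [this]; ring

lemma J_sub_nat (z τ : ℂ) (m : ℕ) :
    jacobiThetaProd (z - (m:ℂ)) τ = (-1)^m * jacobiThetaProd z τ := by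
  induction m with
  | zero => simp
  | succ m ih =>
    have h1 : z - ((m:ℂ)+1) = (z - (m:ℂ)) - 1 := by ring
    push_cast
    rw [h1, J_sub_one, ih]
    ring

set_option maxHeartbeats 2000000 in
lemma J_add_tau (z τ : ℂ) (hτ : 0 < τ.im) :
    jacobiThetaProd (z + τ) τ =
      -Complex.exp (-((π:ℂ)*I*τ) - 2*(π:ℂ)*I*z) * jacobiThetaProd z τ := by
  have key := my_sin_key z τ
  set q := Complex.exp (2*(π:ℂ)*I*τ) with hqdef
  set x := Complex.exp (2*(π:ℂ)*I*z) with hxdef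
  set y := Complex.exp (-(2*(π:ℂ)*I*z)) with hydef
  have hq : ‖q‖ < 1 := by
    rw [hqdef, Complex.norm_exp]
    have hre : (2*(π:ℂ)*I*τ).re = -(2*π*τ.im) := by
      simp [Complex.mul_re, Complex.mul_im]
    rw [hre, Real.exp_lt_one_iff]
    have := Real.pi_pos
    nlinarith
  have hxy : x * y = 1 := by rw [hxdef, hydef, ← Complex.exp_add]; simp
  have hX : Complex.exp (2*(π:ℂ)*I*(z+τ)) = q * x := by
    rw [show (2:ℂ)*π*I*(z+τ) = 2*π*I*τ + 2*π*I*z by ring, Complex.exp_add]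
  have hq1 : q * Complex.exp (-(2*(π:ℂ)*I*τ)) = 1 := by
    rw [hqdef, ← Complex.exp_add]; simp
  have hY : ∀ l : ℕ, q^(l+1) * Complex.exp (-(2*(π:ℂ)*I*(z+τ))) = q^l * y := by
    intro l
    rw [show -(2*(π:ℂ)*I*(z+τ)) = -(2*(π:ℂ)*I*z) + -(2*(π:ℂ)*I*τ) by ring, Complex.exp_add,
      ← hydef, pow_succ]
    linear_combination q^l * y * hq1
  unfold jacobiThetaProd
  rw [hX, ← hqdef, ← hxdef, ← hydef]
  have hP : (∏' l : ℕ, (1 - q^(l+1)) * (1 - q^(l+1)*(q*x)) *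
        (1 - q^(l+1) * Complex.exp (-(2*(π:ℂ)*I*(z+τ))))) =
      ∏' l : ℕ, (1 - q^(l+1)) * (1 - q^(l+1)*(q*x)) * (1 - q^l*y) :=
    tprod_congr (fun l => by rw [hY l])
  rw [hP]
  by_cases hA : ∃ m : ℕ, q^(m+1)*x = 1
  · obtain ⟨m, hm⟩ := hA
    have hz0 : (∏' l : ℕ, (1 - q^(l+1)) * (1 - q^(l+1)*x) * (1 - q^(l+1)*y)) = 0 :=
      my_tprod_eq_zero m (show (1 - q^(m+1)) * (1 - q^(m+1)*x) * (1 - q^(m+1)*y) = 0 by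
        rw [hm]; ring)
    rw [hz0, mul_zero, mul_zero]
    match m, hm with
    | 0, hm =>
      have hs : Complex.sin ((π:ℂ)*(z+τ)) = 0 := by
        apply my_sin_pi_eq_zero
        rw [hX]
        simpa using hm
      rw [hs]; ring
    | m'+1, hm =>
      have hl0 : (∏' l : ℕ, (1 - q^(l+1)) * (1 - q^(l+1)*(q*x)) * (1 - q^l*y)) = 0 :=
        my_tprod_eq_zero m' (show (1 - q^(m'+1)) * (1 - q^(m'+1)*(q*x)) * (1 - q^(m')*y) = 0 by
          have h2 : q^(m'+1)*(q*x) = 1 := by rw [← hm]; ring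
          rw [h2]; ring)
      rw [hl0, mul_zero]
  · by_cases hB : ∃ m : ℕ, q^m * y = 1
    · obtain ⟨m, hm⟩ := hB
      have hl0 : (∏' l : ℕ, (1 - q^(l+1)) * (1 - q^(l+1)*(q*x)) * (1 - q^l*y)) = 0 :=
        my_tprod_eq_zero m (show (1 - q^(m+1)) * (1 - q^(m+1)*(q*x)) * (1 - q^m*y) = 0 by
          rw [hm]; ring)
      rw [hl0, mul_zero]
      match m, hm with
      | 0, hm =>
        have hy1 : y = 1 := by simpa using hm
        have hx1 : x = 1 := by rw [hy1, mul_one] at hxy; exact hxy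
        have hs : Complex.sin ((π:ℂ)*z) = 0 := by
          apply my_sin_pi_eq_zero
          rw [← hxdef]; exact hx1
        rw [hs]; ring
      | m'+1, hm =>
        have hz0 : (∏' l : ℕ, (1 - q^(l+1)) * (1 - q^(l+1)*x) * (1 - q^(l+1)*y)) = 0 :=
          my_tprod_eq_zero m' (show (1 - q^(m'+1)) * (1 - q^(m'+1)*x) * (1 - q^(m'+1)*y) = 0 by
            rw [hm]; ring)
        rw [hz0]; ring
    · push_neg at hA hB
      have n1 : ∀ l : ℕ, (1:ℂ) - q^(l+1) ≠ 0 := by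
        intro l h
        have h1 : q^(l+1) = 1 := by linear_combination -h
        have h2 : ‖q‖^(l+1) < 1 := pow_lt_one₀ (norm_nonneg q) hq (Nat.succ_ne_zero l)
        rw [← norm_pow, h1, norm_one] at h2
        exact lt_irrefl _ h2
      have n2 : ∀ l : ℕ, (1:ℂ) - q^(l+1)*x ≠ 0 := fun l h =>
        hA l (by linear_combination -h)
      have n2' : ∀ l : ℕ, (1:ℂ) - q^(l+1)*(q*x) ≠ 0 := fun l h =>
        hA (l+1) (by linear_combination -h)
      have n3 : ∀ l : ℕ, (1:ℂ) - q^(l+1)*y ≠ 0 := fun l h =>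
        hB (l+1) (by linear_combination -h)
      have M1 : Multipliable (fun l : ℕ => (1:ℂ) - q^(l+1)) :=
        (my_multipliable q 1 hq (fun l => by rw [mul_one]; exact n1 l)).congr
          (fun l => by rw [mul_one])
      have M2 := my_multipliable q x hq n2
      have M2' := my_multipliable q (q*x) hq n2'
      have M3 := my_multipliable q y hq n3
      have hqne : q ≠ 0 := by rw [hqdef]; exact Complex.exp_ne_zero _
      have hshift : ∀ l : ℕ, q^(l+1)*(y*q⁻¹) = q^l*y := by
        intro l
        rw [pow_succ, mul_assoc]
        rw [show q * (y * q⁻¹) = y * (q * q⁻¹) by ring, mul_inv_cancel₀ hqne, mul_one]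
      have M3' : Multipliable (fun l : ℕ => (1:ℂ) - q^l*y) := by
        refine (my_multipliable q (y*q⁻¹) hq ?_).congr (fun l => by rw [hshift l])
        intro l h
        rw [hshift l] at h
        exact hB l (by linear_combination -h)
      have hsplitt : (∏' l : ℕ, (1 - q^(l+1)) * (1 - q^(l+1)*(q*x)) * (1 - q^l*y)) =
          (∏' l : ℕ, (1 - q^(l+1))) * (∏' l : ℕ, (1 - q^(l+1)*(q*x))) *
            (∏' l : ℕ, (1 - q^l*y)) := by
        rw [Multipliable.tprod_mul (M1.mul M2') M3', Multipliable.tprod_mul M1 M2']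
      have hsplitz : (∏' l : ℕ, (1 - q^(l+1)) * (1 - q^(l+1)*x) * (1 - q^(l+1)*y)) =
          (∏' l : ℕ, (1 - q^(l+1))) * (∏' l : ℕ, (1 - q^(l+1)*x)) *
            (∏' l : ℕ, (1 - q^(l+1)*y)) := by
        rw [Multipliable.tprod_mul (M1.mul M2) M3, Multipliable.tprod_mul M1 M2]
      have Mh : Multipliable (fun l : ℕ => (1:ℂ) - q^l*(q*x)) :=
        M2.congr (fun l => by rw [pow_succ]; ring_nf)
      have hT2 : (∏' l : ℕ, (1 - q^(l+1)*x)) =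
          (1 - q*x) * ∏' l : ℕ, (1 - q^(l+1)*(q*x)) := by
        have h0 : (∏' l : ℕ, (1 - q^(l+1)*x)) = ∏' l : ℕ, (1 - q^l*(q*x)) :=
          tprod_congr (fun l => by rw [pow_succ]; ring_nf)
        rw [h0, tprod_eq_zero_mul' (f := fun l : ℕ => (1:ℂ) - q^l*(q*x)) M2']
        norm_num
      have hT3 : (∏' l : ℕ, (1 - q^l*y)) = (1 - y) * ∏' l : ℕ, (1 - q^(l+1)*y) := by
        have h := tprod_eq_zero_mul' (f := fun l : ℕ => (1:ℂ) - q^l*y) M3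
        simpa using h
      rw [hsplitt, hsplitz, hT2, hT3]
      set E := Complex.exp ((π:ℂ)*I*τ/4) with hE
      set P1 := ∏' l : ℕ, ((1:ℂ) - q^(l+1)) with hP1
      set P2 := ∏' l : ℕ, ((1:ℂ) - q^(l+1)*(q*x)) with hP2
      set P3 := ∏' l : ℕ, ((1:ℂ) - q^(l+1)*y) with hP3
      linear_combination (E*P1*P2*P3) * key

lemma J_sub_tau (z τ : ℂ) (hτ : 0 < τ.im) :
    jacobiThetaProd (z - τ) τ =
      -Complex.exp (2*(π:ℂ)*I*z - (π:ℂ)*I*τ) * jacobiThetaProd z τ := by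
  have h := J_add_tau (z - τ) τ hτ
  rw [sub_add_cancel] at h
  rw [h]
  have hc : Complex.exp (2*(π:ℂ)*I*z - (π:ℂ)*I*τ) *
      Complex.exp (-((π:ℂ)*I*τ) - 2*(π:ℂ)*I*(z - τ)) = 1 := by
    rw [← Complex.exp_add, show 2*(π:ℂ)*I*z - (π:ℂ)*I*τ +
      (-((π:ℂ)*I*τ) - 2*(π:ℂ)*I*(z - τ)) = 0 by ring, Complex.exp_zero]
  linear_combination (-(jacobiThetaProd (z - τ) τ)) * hc

lemma J_sub_nat_tau (z τ : ℂ) (hτ : 0 < τ.im) (m : ℕ) :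
    jacobiThetaProd (z - (m:ℂ)*τ) τ =
      (-1)^m * Complex.exp ((m:ℂ)*(2*(π:ℂ)*I*z) - (m:ℂ)^2*((π:ℂ)*I*τ)) *
        jacobiThetaProd z τ := by
  induction m with
  | zero => simp
  | succ m ih =>
    have h1 : z - ((m:ℂ)+1)*τ = (z - (m:ℂ)*τ) - τ := by ring
    push_cast
    rw [h1, J_sub_tau _ _ hτ, ih]
    have hc : Complex.exp (2*(π:ℂ)*I*(z - (m:ℂ)*τ) - (π:ℂ)*I*τ) *
        Complex.exp ((m:ℂ)*(2*(π:ℂ)*I*z) - (m:ℂ)^2*((π:ℂ)*I*τ)) =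
        Complex.exp (((m:ℂ)+1)*(2*(π:ℂ)*I*z) - ((m:ℂ)+1)^2*((π:ℂ)*I*τ)) := by
      rw [← Complex.exp_add]
      congr 1
      ring
    calc -Complex.exp (2*(π:ℂ)*I*(z - (m:ℂ)*τ) - (π:ℂ)*I*τ) *
          ((-1)^m * Complex.exp ((m:ℂ)*(2*(π:ℂ)*I*z) - (m:ℂ)^2*((π:ℂ)*I*τ)) *
            jacobiThetaProd z τ)
        = (-1)^(m+1) * (Complex.exp (2*(π:ℂ)*I*(z - (m:ℂ)*τ) - (π:ℂ)*I*τ) *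
            Complex.exp ((m:ℂ)*(2*(π:ℂ)*I*z) - (m:ℂ)^2*((π:ℂ)*I*τ))) *
            jacobiThetaProd z τ := by ring
      _ = (-1)^(m+1) * Complex.exp (((m:ℂ)+1)*(2*(π:ℂ)*I*z) - ((m:ℂ)+1)^2*((π:ℂ)*I*τ)) *
            jacobiThetaProd z τ := by rw [hc]

end helpers

/-- Ellipticity of the integrand in the proof of the independence of the singular elliptic
genus on the resolution: the function `F` below is periodic with respect to the lattice
`2πi(ℤ + τℤ)`, at all points where the denominator theta values are nonzero. -/
theorem F_elliptic (τ z : ℂ) (hτ : 0 < τ.im) (r s : ℕ) (n : Fin r → ℂ) (f : Fin s → ℂ)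
    (α : Fin s → ℝ) (β : Fin s → ℕ) (αt : ℝ)
    (hαt : αt = (r : ℝ) - 1 + ∑ k, α k * (β k : ℝ))
    (F : ℂ → ℂ)
    (hF : ∀ t : ℂ, F t =
      jacobiThetaProd (t / (2 * (π : ℂ) * I) - ((αt : ℂ) + 1) * z) τ /
          jacobiThetaProd (t / (2 * (π : ℂ) * I)) τ *
        (∏ l : Fin r,
          jacobiThetaProd ((n l - t) / (2 * (π : ℂ) * I) - z) τ /
            jacobiThetaProd ((n l - t) / (2 * (π : ℂ) * I)) τ) *
        ∏ k : Fin s,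
          jacobiThetaProd ((f k - (β k : ℂ) * t) / (2 * (π : ℂ) * I) - (((α k : ℂ)) + 1) * z) τ /
            jacobiThetaProd ((f k - (β k : ℂ) * t) / (2 * (π : ℂ) * I) - z) τ)
    (D : ℂ → Prop)
    (hD : ∀ t : ℂ, D t ↔
      jacobiThetaProd (t / (2 * (π : ℂ) * I)) τ ≠ 0 ∧
      (∀ l : Fin r, jacobiThetaProd ((n l - t) / (2 * (π : ℂ) * I)) τ ≠ 0) ∧
      (∀ k : Fin s,
        jacobiThetaProd ((f k - (β k : ℂ) * t) / (2 * (π : ℂ) * I) - z) τ ≠ 0))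
    (t : ℂ) (h1 : D t) (h2 : D (t + 2 * (π : ℂ) * I)) (h3 : D (t + 2 * (π : ℂ) * I * τ)) :
    F (t + 2 * (π : ℂ) * I) = F t ∧ F (t + 2 * (π : ℂ) * I * τ) = F t := by
  have hpi : (π:ℂ) ≠ 0 := by exact_mod_cast Real.pi_ne_zero
  have hπ : (2 * (π:ℂ) * I) ≠ 0 :=
    mul_ne_zero (mul_ne_zero two_ne_zero hpi) Complex.I_ne_zero
  constructor
  · -- period 2πi
    rw [hF, hF]
    have H0 : jacobiThetaProd ((t + 2 * (π : ℂ) * I) / (2 * (π : ℂ) * I) - ((αt : ℂ) + 1) * z) τ /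
          jacobiThetaProd ((t + 2 * (π : ℂ) * I) / (2 * (π : ℂ) * I)) τ =
        jacobiThetaProd (t / (2 * (π : ℂ) * I) - ((αt : ℂ) + 1) * z) τ /
          jacobiThetaProd (t / (2 * (π : ℂ) * I)) τ := by
      rw [show (t + 2 * (π : ℂ) * I) / (2 * (π : ℂ) * I) - ((αt : ℂ) + 1) * z =
            (t / (2 * (π : ℂ) * I) - ((αt : ℂ) + 1) * z) + 1 by field_simp; ring,
          show (t + 2 * (π : ℂ) * I) / (2 * (π : ℂ) * I) = t / (2 * (π : ℂ) * I) + 1 by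
            field_simp,
          J_add_one, J_add_one, neg_div_neg_eq]
    have H1 : ∀ l : Fin r,
        jacobiThetaProd ((n l - (t + 2 * (π : ℂ) * I)) / (2 * (π : ℂ) * I) - z) τ /
          jacobiThetaProd ((n l - (t + 2 * (π : ℂ) * I)) / (2 * (π : ℂ) * I)) τ =
        jacobiThetaProd ((n l - t) / (2 * (π : ℂ) * I) - z) τ /
          jacobiThetaProd ((n l - t) / (2 * (π : ℂ) * I)) τ := by
      intro l
      rw [show (n l - (t + 2 * (π : ℂ) * I)) / (2 * (π : ℂ) * I) - z =
            ((n l - t) / (2 * (π : ℂ) * I) - z) - 1 by field_simp; ring,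
          show (n l - (t + 2 * (π : ℂ) * I)) / (2 * (π : ℂ) * I) =
            (n l - t) / (2 * (π : ℂ) * I) - 1 by field_simp; ring,
          J_sub_one, J_sub_one, neg_div_neg_eq]
    have H2 : ∀ k : Fin s,
        jacobiThetaProd ((f k - (β k : ℂ) * (t + 2 * (π : ℂ) * I)) / (2 * (π : ℂ) * I) -
            (((α k : ℂ)) + 1) * z) τ /
          jacobiThetaProd ((f k - (β k : ℂ) * (t + 2 * (π : ℂ) * I)) / (2 * (π : ℂ) * I) - z) τ =
        jacobiThetaProd ((f k - (β k : ℂ) * t) / (2 * (π : ℂ) * I) - (((α k : ℂ)) + 1) * z) τ /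
          jacobiThetaProd ((f k - (β k : ℂ) * t) / (2 * (π : ℂ) * I) - z) τ := by
      intro k
      rw [show (f k - (β k : ℂ) * (t + 2 * (π : ℂ) * I)) / (2 * (π : ℂ) * I) -
            (((α k : ℂ)) + 1) * z =
            ((f k - (β k : ℂ) * t) / (2 * (π : ℂ) * I) - (((α k : ℂ)) + 1) * z) - ((β k : ℕ) : ℂ)
            by field_simp; ring,
          show (f k - (β k : ℂ) * (t + 2 * (π : ℂ) * I)) / (2 * (π : ℂ) * I) - z =
            ((f k - (β k : ℂ) * t) / (2 * (π : ℂ) * I) - z) - ((β k : ℕ) : ℂ) by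
            field_simp; ring,
          J_sub_nat, J_sub_nat,
          mul_div_mul_left _ _ (pow_ne_zero _ (neg_ne_zero.mpr one_ne_zero))]
    rw [H0, Finset.prod_congr rfl (fun l _ => H1 l), Finset.prod_congr rfl (fun k _ => H2 k)]
  · -- period 2πiτ
    rw [hF, hF]
    have H0 : jacobiThetaProd ((t + 2 * (π : ℂ) * I * τ) / (2 * (π : ℂ) * I) - ((αt : ℂ) + 1) * z) τ /
          jacobiThetaProd ((t + 2 * (π : ℂ) * I * τ) / (2 * (π : ℂ) * I)) τ =
        Complex.exp (2*(π:ℂ)*I*(((αt : ℂ) + 1) * z)) *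
        (jacobiThetaProd (t / (2 * (π : ℂ) * I) - ((αt : ℂ) + 1) * z) τ /
          jacobiThetaProd (t / (2 * (π : ℂ) * I)) τ) := by
      rw [show (t + 2 * (π : ℂ) * I * τ) / (2 * (π : ℂ) * I) - ((αt : ℂ) + 1) * z =
            (t / (2 * (π : ℂ) * I) - ((αt : ℂ) + 1) * z) + τ by field_simp; ring,
          show (t + 2 * (π : ℂ) * I * τ) / (2 * (π : ℂ) * I) = t / (2 * (π : ℂ) * I) + τ by
            field_simp,
          J_add_tau _ _ hτ, J_add_tau _ _ hτ, mul_div_mul_comm, neg_div_neg_eq,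
          div_eq_mul_inv (Complex.exp _), ← Complex.exp_neg, ← Complex.exp_add]
      congr 2
      ring
    have H1 : ∀ l : Fin r,
        jacobiThetaProd ((n l - (t + 2 * (π : ℂ) * I * τ)) / (2 * (π : ℂ) * I) - z) τ /
          jacobiThetaProd ((n l - (t + 2 * (π : ℂ) * I * τ)) / (2 * (π : ℂ) * I)) τ =
        Complex.exp (-(2*(π:ℂ)*I*z)) *
        (jacobiThetaProd ((n l - t) / (2 * (π : ℂ) * I) - z) τ /
          jacobiThetaProd ((n l - t) / (2 * (π : ℂ) * I)) τ) := by
      intro l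
      rw [show (n l - (t + 2 * (π : ℂ) * I * τ)) / (2 * (π : ℂ) * I) - z =
            ((n l - t) / (2 * (π : ℂ) * I) - z) - τ by field_simp; ring,
          show (n l - (t + 2 * (π : ℂ) * I * τ)) / (2 * (π : ℂ) * I) =
            (n l - t) / (2 * (π : ℂ) * I) - τ by field_simp; ring,
          J_sub_tau _ _ hτ, J_sub_tau _ _ hτ, mul_div_mul_comm, neg_div_neg_eq,
          div_eq_mul_inv (Complex.exp _), ← Complex.exp_neg, ← Complex.exp_add]
      congr 2
      ring
    have H2 : ∀ k : Fin s,
        jacobiThetaProd ((f k - (β k : ℂ) * (t + 2 * (π : ℂ) * I * τ)) / (2 * (π : ℂ) * I) -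
            (((α k : ℂ)) + 1) * z) τ /
          jacobiThetaProd ((f k - (β k : ℂ) * (t + 2 * (π : ℂ) * I * τ)) / (2 * (π : ℂ) * I) - z) τ =
        Complex.exp (-((β k : ℂ) * (2*(π:ℂ)*I*((α k : ℂ)*z)))) *
        (jacobiThetaProd ((f k - (β k : ℂ) * t) / (2 * (π : ℂ) * I) - (((α k : ℂ)) + 1) * z) τ /
          jacobiThetaProd ((f k - (β k : ℂ) * t) / (2 * (π : ℂ) * I) - z) τ) := by
      intro k
      rw [show (f k - (β k : ℂ) * (t + 2 * (π : ℂ) * I * τ)) / (2 * (π : ℂ) * I) -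
            (((α k : ℂ)) + 1) * z =
            ((f k - (β k : ℂ) * t) / (2 * (π : ℂ) * I) - (((α k : ℂ)) + 1) * z) -
              ((β k : ℕ) : ℂ) * τ by field_simp; ring,
          show (f k - (β k : ℂ) * (t + 2 * (π : ℂ) * I * τ)) / (2 * (π : ℂ) * I) - z =
            ((f k - (β k : ℂ) * t) / (2 * (π : ℂ) * I) - z) - ((β k : ℕ) : ℂ) * τ by
            field_simp; ring,
          J_sub_nat_tau _ _ hτ, J_sub_nat_tau _ _ hτ, mul_div_mul_comm,
          mul_div_mul_left _ _ (pow_ne_zero _ (neg_ne_zero.mpr one_ne_zero)),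
          div_eq_mul_inv (Complex.exp _), ← Complex.exp_neg, ← Complex.exp_add]
      congr 2
      ring
    rw [H0, Finset.prod_congr rfl (fun l _ => H1 l), Finset.prod_congr rfl (fun k _ => H2 k),
      Finset.prod_mul_distrib, Finset.prod_mul_distrib, Finset.prod_const, Finset.card_univ,
      Fintype.card_fin, ← Complex.exp_sum]
    have hsum : (∑ k : Fin s, -((β k : ℂ) * (2*(π:ℂ)*I*((α k : ℂ)*z)))) =
        -(2*(π:ℂ)*I*z) * ∑ k : Fin s, (α k : ℂ) * (β k : ℂ) := by
      rw [Finset.mul_sum]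
      apply Finset.sum_congr rfl
      intro k _
      ring
    have hαtc : (αt : ℂ) = (r : ℂ) - 1 + ∑ k : Fin s, (α k : ℂ) * (β k : ℂ) := by
      rw [hαt]
      push_cast
      ring
    have hS : Complex.exp (2*(π:ℂ)*I*(((αt : ℂ) + 1) * z)) *
        Complex.exp (-(2*(π:ℂ)*I*z)) ^ r *
        Complex.exp (∑ k : Fin s, -((β k : ℂ) * (2*(π:ℂ)*I*((α k : ℂ)*z)))) = 1 := by
      rw [← Complex.exp_nat_mul, ← Complex.exp_add, ← Complex.exp_add, hsum]
      rw [show 2*(π:ℂ)*I*(((αt : ℂ) + 1) * z) + (r:ℂ) * -(2*(π:ℂ)*I*z) +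
          -(2*(π:ℂ)*I*z) * ∑ k : Fin s, (α k : ℂ) * (β k : ℂ) = 0 from by
        linear_combination (2*(π:ℂ)*I*z) * hαtc]
      exact Complex.exp_zero
    linear_combination
      ((jacobiThetaProd (t / (2 * (π : ℂ) * I) - ((αt : ℂ) + 1) * z) τ /
          jacobiThetaProd (t / (2 * (π : ℂ) * I)) τ) *
        (∏ l : Fin r, jacobiThetaProd ((n l - t) / (2 * (π : ℂ) * I) - z) τ /
            jacobiThetaProd ((n l - t) / (2 * (π : ℂ) * I)) τ) *
        (∏ k : Fin s,
          jacobiThetaProd ((f k - (β k : ℂ) * t) / (2 * (π : ℂ) * I) - (((α k : ℂ)) + 1) * z) τ /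
            jacobiThetaProd ((f k - (β k : ℂ) * t) / (2 * (π : ℂ) * I) - z) τ)) * hS
end

section
/- Let α be a real number, τ in the complex upper half-plane, x, z ∈ ℂ, and let n be an integer such that n·α ∈ ℤ. Then, whenever all theta values appearing in the denominators are nonzero, Ψ(x, α, z + n, τ) = Ψ(x, α, z, τ) and Ψ(x, α, z + nτ, τ) = exp(n·α·x) · Ψ(x, α, z, τ). -/
open Complex Real

/-- `Ψ(x,α,z,τ) = θ(x/(2πi) − (α+1)z, τ)·θ(−z, τ) / (θ(x/(2πi) − z, τ)·θ(−(α+1)z, τ))`. -/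
noncomputable def PsiFun (x : ℂ) (α : ℝ) (z τ : ℂ) : ℂ :=
  jacobiThetaProd (x / (2 * (π : ℂ) * I) - ((α : ℂ) + 1) * z) τ * jacobiThetaProd (-z) τ /
    (jacobiThetaProd (x / (2 * (π : ℂ) * I) - z) τ *
      jacobiThetaProd (-(((α : ℂ) + 1) * z)) τ)

namespace PsiAux

open Filter

lemma norm_q_lt_one {τ : ℂ} (hτ : 0 < τ.im) : ‖Complex.exp (2*(π:ℂ)*I*τ)‖ < 1 := by
  rw [Complex.norm_exp, Real.exp_lt_one_iff]
  simp [Complex.mul_re, Complex.mul_im]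
  positivity

lemma mult_base {q : ℂ} (hq : ‖q‖ < 1) (c : ℂ) :
    Multipliable (fun l : ℕ => 1 - q ^ l * c) := by
  by_cases hz : ∀ l, 1 - q^l*c ≠ 0
  · apply Complex.multipliable_of_summable_log
    apply Summable.of_norm_bounded_eventually (g := fun l => (3/2*‖c‖)*‖q‖^l)
      ((summable_geometric_of_lt_one (norm_nonneg q) hq).mul_left _)
    rw [Nat.cofinite_eq_atTop]
    have htend : Tendsto (fun l : ℕ => ‖q‖^l * ‖c‖) atTop (nhds 0) := by
      simpa using (tendsto_pow_atTop_nhds_zero_of_lt_one (norm_nonneg q) hq).mul_const ‖c‖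
    filter_upwards [htend.eventually_le_const (by norm_num : (0:ℝ) < 1/2)] with l hl
    have h1 : ‖-(q^l*c)‖ ≤ 1/2 := by rwa [norm_neg, norm_mul, norm_pow]
    have h2 := Complex.norm_log_one_add_half_le_self h1
    rw [show (1 : ℂ) + -(q^l*c) = 1 - q^l*c by ring] at h2
    calc ‖Complex.log (1-q^l*c)‖ ≤ 3/2*‖-(q^l*c)‖ := h2
      _ = 3/2*‖c‖*‖q‖^l := by rw [norm_neg, norm_mul, norm_pow]; ring
  · push_neg at hz
    obtain ⟨l0, h0⟩ := hz
    refine ⟨0, ?_⟩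
    apply Tendsto.congr' _ tendsto_const_nhds
    filter_upwards [Filter.eventually_ge_atTop ({l0} : Finset ℕ)] with s hs
    exact (Finset.prod_eq_zero (hs (Finset.mem_singleton_self l0)) h0).symm

lemma mult_succ {q : ℂ} (hq : ‖q‖ < 1) (c : ℂ) :
    Multipliable (fun l : ℕ => 1 - q ^ (l+1) * c) := by
  apply (mult_base hq (q*c)).congr
  intro l
  rw [pow_succ]; ring

lemma mult_one' {q : ℂ} (hq : ‖q‖ < 1) :
    Multipliable (fun l : ℕ => 1 - q ^ (l+1)) := by
  simpa using mult_succ hq 1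

lemma tprod_triple {f g h : ℕ → ℂ} (hf : Multipliable f) (hg : Multipliable g)
    (hh : Multipliable h) :
    ∏' l, f l * g l * h l = (∏' l, f l) * (∏' l, g l) * (∏' l, h l) := by
  rw [Multipliable.tprod_mul (hf.mul hg) hh, Multipliable.tprod_mul hf hg]

lemma theta_split (z τ : ℂ) (hτ : 0 < τ.im) :
    jacobiThetaProd z τ =
      Complex.exp ((π:ℂ) * I * τ / 4) * (2 * Complex.sin ((π:ℂ) * z)) *
      ((∏' l : ℕ, (1 - Complex.exp (2*(π:ℂ)*I*τ) ^ (l+1))) *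
       (∏' l : ℕ, (1 - Complex.exp (2*(π:ℂ)*I*τ) ^ (l+1) * Complex.exp (2*(π:ℂ)*I*z))) *
       (∏' l : ℕ, (1 - Complex.exp (2*(π:ℂ)*I*τ) ^ (l+1) * Complex.exp (-(2*(π:ℂ)*I*z))))) := by
  unfold jacobiThetaProd
  have hq := norm_q_lt_one hτ
  rw [tprod_triple (mult_one' hq) (mult_succ hq _) (mult_succ hq _)]

lemma theta_add_one (z τ : ℂ) : jacobiThetaProd (z+1) τ = -jacobiThetaProd z τ := by
  unfold jacobiThetaProd
  have h1 : Complex.exp (2*(π:ℂ)*I*(z+1)) = Complex.exp (2*(π:ℂ)*I*z) := by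
    rw [show 2*(π:ℂ)*I*(z+1) = 2*(π:ℂ)*I*z + 2*(π:ℂ)*I by ring, Complex.exp_add,
      Complex.exp_two_pi_mul_I, mul_one]
  have h2 : Complex.exp (-(2*(π:ℂ)*I*(z+1))) = Complex.exp (-(2*(π:ℂ)*I*z)) := by
    have hh : Complex.exp (-(2*(π:ℂ)*I)) = 1 := by
      rw [Complex.exp_neg, Complex.exp_two_pi_mul_I, inv_one]
    rw [show -(2*(π:ℂ)*I*(z+1)) = -(2*(π:ℂ)*I*z) + -(2*(π:ℂ)*I) by ring, Complex.exp_add,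
      hh, mul_one]
  have h3 : Complex.sin ((π:ℂ)*(z+1)) = -Complex.sin ((π:ℂ)*z) := by
    rw [show (π:ℂ)*(z+1) = (π:ℂ)*z + π by ring, Complex.sin_add_pi]
  rw [h1, h2, h3]; ring

lemma sin_key (z τ : ℂ) :
    Complex.sin ((π:ℂ)*(z+τ)) * (1 - Complex.exp (-(2*(π:ℂ)*I*z))) =
    Complex.exp ((π:ℂ)*I - (π:ℂ)*I*τ - 2*(π:ℂ)*I*z) * Complex.sin ((π:ℂ)*z)
      * (1 - Complex.exp (2*(π:ℂ)*I*τ) * Complex.exp (2*(π:ℂ)*I*z)) := by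
  have ha : Complex.exp ((π:ℂ)*I*z) ≠ 0 := Complex.exp_ne_zero _
  have hb : Complex.exp ((π:ℂ)*I*τ) ≠ 0 := Complex.exp_ne_zero _
  set a := Complex.exp ((π:ℂ)*I*z) with hadef
  set b := Complex.exp ((π:ℂ)*I*τ) with hbdef
  have e1 : Complex.exp (-((π:ℂ)*(z+τ))*I) = (a*b)⁻¹ := by
    rw [← Complex.exp_add, ← Complex.exp_neg]; congr 1; ring
  have e2 : Complex.exp (((π:ℂ)*(z+τ))*I) = a*b := by
    rw [← Complex.exp_add]; congr 1; ring
  have e3 : Complex.exp (-(2*(π:ℂ)*I*z)) = (a^2)⁻¹ := by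
    rw [show -(2*(π:ℂ)*I*z) = -(((π:ℂ)*I*z) + ((π:ℂ)*I*z)) by ring, Complex.exp_neg,
      Complex.exp_add, sq]
  have e4 : Complex.exp ((π:ℂ)*I - (π:ℂ)*I*τ - 2*(π:ℂ)*I*z) = -1 / (b * a^2) := by
    rw [eq_div_iff (mul_ne_zero hb (pow_ne_zero 2 ha)), hadef, hbdef, sq,
      ← Complex.exp_add, ← Complex.exp_add, ← Complex.exp_add, ← Complex.exp_pi_mul_I]
    congr 1; ring
  have e5 : Complex.exp (-((π:ℂ)*z)*I) = a⁻¹ := by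
    rw [← Complex.exp_neg]; congr 1; ring
  have e6 : Complex.exp (((π:ℂ)*z)*I) = a := by congr 1; ring
  have e7 : Complex.exp (2*(π:ℂ)*I*τ) = b^2 := by
    rw [sq, ← Complex.exp_add]; congr 1; ring
  have e8 : Complex.exp (2*(π:ℂ)*I*z) = a^2 := by
    rw [sq, ← Complex.exp_add]; congr 1; ring
  rw [Complex.sin, Complex.sin, e1, e2, e3, e4, e5, e6, e7, e8]
  have hI : (I:ℂ) ≠ 0 := I_ne_zero
  field_simp
  ring

lemma prod_shift {Q w v s s' e : ℂ} (hQlt : ‖Q‖ < 1) (hQ0 : Q ≠ 0)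
    (hkey : s' * (1 - v) = e * s * (1 - Q * w)) (C : ℂ) :
    C * (2*s') * ((∏' l : ℕ, (1 - Q^(l+1))) * (∏' l : ℕ, (1 - Q^(l+1) * (Q*w))) *
      (∏' l : ℕ, (1 - Q^(l+1) * (Q⁻¹*v)))) =
    e * (C * (2*s) * ((∏' l : ℕ, (1 - Q^(l+1))) * (∏' l : ℕ, (1 - Q^(l+1) * w)) *
      (∏' l : ℕ, (1 - Q^(l+1) * v)))) := by
  have e2 : (∏' l : ℕ, (1 - Q^(l+1) * (Q*w))) = ∏' l : ℕ, (1 - Q^(l+1+1)*w) :=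
    tprod_congr (fun l => by rw [pow_succ]; ring)
  have e3 : (∏' l : ℕ, (1 - Q^(l+1) * (Q⁻¹*v))) = ∏' l : ℕ, (1 - Q^l*v) :=
    tprod_congr (fun l => by rw [pow_succ]; field_simp)
  have e4 : (∏' l : ℕ, (1 - Q^l*v)) = (1-v) * ∏' l : ℕ, (1 - Q^(l+1)*v) := by
    have h := tprod_eq_zero_mul' (f := fun l : ℕ => 1 - Q^l*v) (mult_succ hQlt v)
    simpa using h
  have e5 : (∏' l : ℕ, (1 - Q^(l+1)*w)) = (1-Q*w) * ∏' l : ℕ, (1 - Q^(l+1+1)*w) := by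
    have h := tprod_eq_zero_mul' (f := fun l : ℕ => 1 - Q^(l+1)*w)
      ((mult_succ hQlt (Q*w)).congr (fun l => by rw [pow_succ]; ring))
    simpa using h
  rw [e2, e3, e4, e5]
  linear_combination (C * 2 * (∏' l : ℕ, (1 - Q^(l+1))) * (∏' l : ℕ, (1 - Q^(l+1+1)*w)) *
    (∏' l : ℕ, (1 - Q^(l+1)*v))) * hkey

lemma theta_add_tau (z τ : ℂ) (hτ : 0 < τ.im) :
    jacobiThetaProd (z+τ) τ =
      Complex.exp ((π:ℂ)*I - (π:ℂ)*I*τ - 2*(π:ℂ)*I*z) * jacobiThetaProd z τ := by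
  have hq := norm_q_lt_one hτ
  have hQ0 : Complex.exp (2*(π:ℂ)*I*τ) ≠ 0 := Complex.exp_ne_zero _
  rw [theta_split (z+τ) τ hτ, theta_split z τ hτ]
  have h1 : Complex.exp (2*(π:ℂ)*I*(z+τ)) =
      Complex.exp (2*(π:ℂ)*I*τ) * Complex.exp (2*(π:ℂ)*I*z) := by
    rw [← Complex.exp_add]; congr 1; ring
  have h2 : Complex.exp (-(2*(π:ℂ)*I*(z+τ))) =
      (Complex.exp (2*(π:ℂ)*I*τ))⁻¹ * Complex.exp (-(2*(π:ℂ)*I*z)) := by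
    rw [← Complex.exp_neg, ← Complex.exp_add]; congr 1; ring
  rw [h1, h2]
  exact prod_shift hq hQ0 (sin_key z τ) _

lemma theta_add_int (k : ℤ) (z τ : ℂ) :
    jacobiThetaProd (z + (k:ℂ)) τ = Complex.exp ((π:ℂ)*I*k) * jacobiThetaProd z τ := by
  induction k using Int.induction_on with
  | zero => simp
  | succ n ih =>
    have : (z + ((n:ℤ)+1 : ℤ)) = (z + (n:ℤ)) + 1 := by push_cast; ring
    rw [this, theta_add_one, ih]
    rw [show ((π:ℂ)*I*((n:ℤ)+1:ℤ)) = (π:ℂ)*I*(n:ℤ) + π*I by push_cast; ring,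
      Complex.exp_add, Complex.exp_pi_mul_I]
    ring
  | pred n ih =>
    have h := theta_add_one (z + ((-(n:ℤ)-1 : ℤ) : ℂ)) τ
    rw [show (z + ((-(n:ℤ)-1 : ℤ) : ℂ)) + 1 = z + ((-(n:ℤ) : ℤ) : ℂ) by push_cast; ring, ih] at h
    have h2 : jacobiThetaProd (z + ((-(n:ℤ)-1 : ℤ) : ℂ)) τ =
        -(Complex.exp ((π:ℂ)*I*((-(n:ℤ):ℤ))) * jacobiThetaProd z τ) := by
      linear_combination h
    rw [h2, show ((π:ℂ)*I*((-(n:ℤ)-1:ℤ))) = (π:ℂ)*I*((-(n:ℤ):ℤ)) + -(π*I) by push_cast; ring,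
      Complex.exp_add, Complex.exp_neg, Complex.exp_pi_mul_I]
    field_simp

lemma theta_add_int_tau (k : ℤ) (z τ : ℂ) (hτ : 0 < τ.im) :
    jacobiThetaProd (z + (k:ℂ)*τ) τ =
      Complex.exp ((π:ℂ)*I*k - (π:ℂ)*I*k^2*τ - 2*(π:ℂ)*I*k*z) * jacobiThetaProd z τ := by
  induction k using Int.induction_on with
  | zero => simp
  | succ n ih =>
    have h := theta_add_tau (z + ((n:ℤ):ℂ)*τ) τ hτ
    rw [show (z + ((n:ℤ):ℂ)*τ) + τ = z + (((n:ℤ)+1:ℤ):ℂ)*τ by push_cast; ring, ih] at h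
    rw [h, ← mul_assoc, ← Complex.exp_add]
    congr 2
    push_cast; ring
  | pred n ih =>
    have h := theta_add_tau (z + ((-(n:ℤ)-1:ℤ):ℂ)*τ) τ hτ
    rw [show (z + ((-(n:ℤ)-1:ℤ):ℂ)*τ) + τ = z + ((-(n:ℤ):ℤ):ℂ)*τ by push_cast; ring, ih] at h
    have hne : Complex.exp ((π:ℂ)*I - (π:ℂ)*I*τ - 2*(π:ℂ)*I*(z + ((-(n:ℤ)-1:ℤ):ℂ)*τ)) ≠ 0 :=
      Complex.exp_ne_zero _
    have h3 : jacobiThetaProd (z + ((-(n:ℤ)-1:ℤ):ℂ)*τ) τ =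
        (Complex.exp ((π:ℂ)*I - (π:ℂ)*I*τ - 2*(π:ℂ)*I*(z + ((-(n:ℤ)-1:ℤ):ℂ)*τ)))⁻¹ *
        (Complex.exp ((π:ℂ)*I*((-(n:ℤ):ℤ):ℂ) - (π:ℂ)*I*((-(n:ℤ):ℤ):ℂ)^2*τ -
          2*(π:ℂ)*I*((-(n:ℤ):ℤ):ℂ)*z) * jacobiThetaProd z τ) := by
      rw [eq_inv_mul_iff_mul_eq₀ hne]
      exact h.symm
    rw [h3, ← Complex.exp_neg, ← mul_assoc, ← Complex.exp_add]
    congr 2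
    push_cast; ring

end PsiAux

open PsiAux in
/-- Quasi-periodicities of the exceptional-divisor factor `Ψ` of the singular elliptic genus:
if `n·α ∈ ℤ` then `Ψ(x,α,z+n,τ) = Ψ(x,α,z,τ)` and `Ψ(x,α,z+nτ,τ) = e^{nαx}·Ψ(x,α,z,τ)`. -/
theorem Psi_quasi_periodic (α : ℝ) (τ : ℂ) (hτ : 0 < τ.im) (x z : ℂ) (n : ℤ)
    (hnα : ∃ m : ℤ, (n : ℝ) * α = (m : ℝ))
    (hd1 : jacobiThetaProd (x / (2 * (π : ℂ) * I) - z) τ ≠ 0)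
    (hd2 : jacobiThetaProd (-(((α : ℂ) + 1) * z)) τ ≠ 0)
    (hd3 : jacobiThetaProd (x / (2 * (π : ℂ) * I) - (z + (n : ℂ))) τ ≠ 0)
    (hd4 : jacobiThetaProd (-(((α : ℂ) + 1) * (z + (n : ℂ)))) τ ≠ 0)
    (hd5 : jacobiThetaProd (x / (2 * (π : ℂ) * I) - (z + (n : ℂ) * τ)) τ ≠ 0)
    (hd6 : jacobiThetaProd (-(((α : ℂ) + 1) * (z + (n : ℂ) * τ))) τ ≠ 0) :
    PsiFun x α (z + (n : ℂ)) τ = PsiFun x α z τ ∧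
    PsiFun x α (z + (n : ℂ) * τ) τ =
      Complex.exp ((n : ℂ) * (α : ℂ) * x) * PsiFun x α z τ := by
  obtain ⟨m, hm⟩ := hnα
  have hc : (n : ℂ) * (α : ℂ) = (m : ℂ) := by exact_mod_cast congrArg Complex.ofReal hm
  set u1 := x / (2 * (π : ℂ) * I) - ((α : ℂ) + 1) * z with hu1
  set u2 := -z with hu2
  set u3 := x / (2 * (π : ℂ) * I) - z with hu3
  set u4 := -(((α : ℂ) + 1) * z) with hu4
  constructor
  · -- shift by n
    have a1 : x / (2 * (π : ℂ) * I) - ((α : ℂ) + 1) * (z + (n : ℂ)) = u1 + ((-(m+n) : ℤ) : ℂ) := by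
      rw [hu1]; push_cast; linear_combination -hc
    have a2 : -(z + (n : ℂ)) = u2 + ((-n : ℤ) : ℂ) := by rw [hu2]; push_cast; ring
    have a3 : x / (2 * (π : ℂ) * I) - (z + (n : ℂ)) = u3 + ((-n : ℤ) : ℂ) := by
      rw [hu3]; push_cast; ring
    have a4 : -(((α : ℂ) + 1) * (z + (n : ℂ))) = u4 + ((-(m+n) : ℤ) : ℂ) := by
      rw [hu4]; push_cast; linear_combination -hc
    rw [PsiFun, PsiFun, a1, a2, a3, a4, theta_add_int, theta_add_int, theta_add_int,
      theta_add_int]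
    rw [show Complex.exp ((π:ℂ)*I*((-(m+n):ℤ))) * jacobiThetaProd u1 τ *
        (Complex.exp ((π:ℂ)*I*((-n:ℤ))) * jacobiThetaProd u2 τ) =
        (Complex.exp ((π:ℂ)*I*((-(m+n):ℤ))) * Complex.exp ((π:ℂ)*I*((-n:ℤ)))) *
        (jacobiThetaProd u1 τ * jacobiThetaProd u2 τ) from by ring,
      show Complex.exp ((π:ℂ)*I*((-n:ℤ))) * jacobiThetaProd u3 τ *
        (Complex.exp ((π:ℂ)*I*((-(m+n):ℤ))) * jacobiThetaProd u4 τ) =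
        (Complex.exp ((π:ℂ)*I*((-(m+n):ℤ))) * Complex.exp ((π:ℂ)*I*((-n:ℤ)))) *
        (jacobiThetaProd u3 τ * jacobiThetaProd u4 τ) from by ring,
      mul_div_mul_left _ _ (mul_ne_zero (Complex.exp_ne_zero _) (Complex.exp_ne_zero _))]
  · -- shift by nτ
    have a1 : x / (2 * (π : ℂ) * I) - ((α : ℂ) + 1) * (z + (n : ℂ) * τ) =
        u1 + ((-(m+n) : ℤ) : ℂ) * τ := by
      rw [hu1]; push_cast; linear_combination -τ*hc
    have a2 : -(z + (n : ℂ) * τ) = u2 + ((-n : ℤ) : ℂ) * τ := by rw [hu2]; push_cast; ring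
    have a3 : x / (2 * (π : ℂ) * I) - (z + (n : ℂ) * τ) = u3 + ((-n : ℤ) : ℂ) * τ := by
      rw [hu3]; push_cast; ring
    have a4 : -(((α : ℂ) + 1) * (z + (n : ℂ) * τ)) = u4 + ((-(m+n) : ℤ) : ℂ) * τ := by
      rw [hu4]; push_cast; linear_combination -τ*hc
    rw [PsiFun, PsiFun, a1, a2, a3, a4, theta_add_int_tau _ _ _ hτ, theta_add_int_tau _ _ _ hτ,
      theta_add_int_tau _ _ _ hτ, theta_add_int_tau _ _ _ hτ]
    set E1 := (π:ℂ)*I*((-(m+n):ℤ)) - (π:ℂ)*I*((-(m+n):ℤ))^2*τ - 2*(π:ℂ)*I*((-(m+n):ℤ))*u1 with hE1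
    set E2 := (π:ℂ)*I*((-n:ℤ)) - (π:ℂ)*I*((-n:ℤ))^2*τ - 2*(π:ℂ)*I*((-n:ℤ))*u2 with hE2
    set E3 := (π:ℂ)*I*((-n:ℤ)) - (π:ℂ)*I*((-n:ℤ))^2*τ - 2*(π:ℂ)*I*((-n:ℤ))*u3 with hE3
    set E4 := (π:ℂ)*I*((-(m+n):ℤ)) - (π:ℂ)*I*((-(m+n):ℤ))^2*τ - 2*(π:ℂ)*I*((-(m+n):ℤ))*u4 with hE4
    have hπ : (π : ℂ) ≠ 0 := by exact_mod_cast Real.pi_ne_zero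
    have hE : Complex.exp E1 * Complex.exp E2 =
        Complex.exp ((n:ℂ)*(α:ℂ)*x) * (Complex.exp E3 * Complex.exp E4) := by
      rw [← Complex.exp_add, ← Complex.exp_add, ← Complex.exp_add]
      congr 1
      rw [hE1, hE2, hE3, hE4, hu1, hu2, hu3, hu4, hc]
      push_cast
      field_simp
      ring
    rw [show Complex.exp E1 * jacobiThetaProd u1 τ * (Complex.exp E2 * jacobiThetaProd u2 τ) =
        (Complex.exp E3 * Complex.exp E4) * (Complex.exp ((n:ℂ)*(α:ℂ)*x) *
          (jacobiThetaProd u1 τ * jacobiThetaProd u2 τ)) from by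
        linear_combination (jacobiThetaProd u1 τ * jacobiThetaProd u2 τ) * hE,
      show Complex.exp E3 * jacobiThetaProd u3 τ * (Complex.exp E4 * jacobiThetaProd u4 τ) =
        (Complex.exp E3 * Complex.exp E4) * (jacobiThetaProd u3 τ * jacobiThetaProd u4 τ) from by
        ring,
      mul_div_mul_left _ _ (mul_ne_zero (Complex.exp_ne_zero _) (Complex.exp_ne_zero _)),
      mul_div_assoc]
end

section
/- Let α be a real number and x, z ∈ ℂ. Set u := exp(2πi·z) and write u^{α+1} for exp(2πi·(α+1)·z). Assume u ≠ 1, u^{α+1} ≠ 1, exp(x) ≠ u and exp(x) ≠ u^{α+1}. Then, as Im τ → +∞ (τ in the upper half-plane), Ψ(x, α, z, τ) tends to (u − 1)·(1 − u^{α+1}·exp(−x)) / ((u^{α+1} − 1)·(1 − u·exp(−x))). -/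
open Complex Real

set_option maxHeartbeats 1000000
section PsiAux
open Filter


noncomputable abbrev Slog (c q : ℂ) : ℂ := ∑' l : ℕ, Complex.log (1 - q ^ (l + 1) * c)

lemma hasProd_and_bound (c q : ℂ) (hq : ‖q‖ * max 1 ‖c‖ ≤ 1/2) :
    HasProd (fun l : ℕ => 1 - q ^ (l + 1) * c) (Complex.exp (Slog c q)) ∧
      ‖Slog c q‖ ≤ 3 * max 1 ‖c‖ * ‖q‖ := by
  set M := max 1 ‖c‖ with hMdef
  have hM1 : (1:ℝ) ≤ M := le_max_left _ _
  have hq2 : ‖q‖ ≤ 1/2 := by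
    have h0 : ‖q‖ * 1 ≤ ‖q‖ * M := by
      apply mul_le_mul_of_nonneg_left hM1 (norm_nonneg q)
    simpa using h0.trans hq
  have hfb : ∀ l : ℕ, ‖q ^ (l+1) * c‖ ≤ M * ‖q‖ ^ (l+1) := by
    intro l
    rw [norm_mul, norm_pow]
    calc ‖q‖ ^ (l+1) * ‖c‖ ≤ ‖q‖ ^ (l+1) * M :=
          mul_le_mul_of_nonneg_left (le_max_right _ _) (pow_nonneg (norm_nonneg q) _)
      _ = M * ‖q‖ ^ (l+1) := mul_comm _ _
  have hhalf : ∀ l : ℕ, M * ‖q‖ ^ (l+1) ≤ 1/2 := by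
    intro l
    have h1 : ‖q‖ ^ l ≤ 1 := pow_le_one₀ (norm_nonneg _) (by linarith)
    calc M * ‖q‖ ^ (l+1) = (‖q‖ * M) * ‖q‖ ^ l := by ring
      _ ≤ (1/2) * 1 := by
          apply mul_le_mul hq h1 (pow_nonneg (norm_nonneg q) l) (by norm_num)
      _ = 1/2 := by norm_num
  have hne : ∀ l : ℕ, 1 - q ^ (l+1) * c ≠ 0 := by
    intro l h
    have h1 : q ^ (l+1) * c = 1 := by linear_combination -h
    have h2 := (hfb l).trans (hhalf l)
    rw [h1, norm_one] at h2
    linarith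
  have hlog : ∀ l : ℕ, ‖Complex.log (1 - q ^ (l+1) * c)‖ ≤ (3/2) * (M * ‖q‖ ^ (l+1)) := by
    intro l
    have h1 : ‖-(q ^ (l+1) * c)‖ ≤ 1/2 := by
      rw [norm_neg]; exact (hfb l).trans (hhalf l)
    have h2 := Complex.norm_log_one_add_half_le_self h1
    rw [norm_neg] at h2
    rw [sub_eq_add_neg]
    exact h2.trans (by have := hfb l; nlinarith [norm_nonneg (q ^ (l+1) * c)])
  have hgs : Summable (fun l : ℕ => (3/2) * (M * ‖q‖ ^ (l+1))) := by
    have h := (summable_geometric_of_lt_one (norm_nonneg q) (by linarith : ‖q‖ < 1)).mul_left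
      ((3/2) * M * ‖q‖)
    exact h.congr fun l => by rw [pow_succ]; ring
  have hls : Summable (fun l : ℕ => ‖Complex.log (1 - q ^ (l+1) * c)‖) :=
    Summable.of_nonneg_of_le (fun l => norm_nonneg _) hlog hgs
  have hsum : Summable (fun l : ℕ => Complex.log (1 - q ^ (l+1) * c)) := hls.of_norm
  constructor
  · have h := hsum.hasSum.cexp
    simp only [Function.comp_def] at h
    have he2 : (fun l : ℕ => Complex.exp (Complex.log (1 - q ^ (l+1) * c)))
        = fun l => 1 - q ^ (l+1) * c := funext fun l => Complex.exp_log (hne l)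
    rwa [he2] at h
  · calc ‖Slog c q‖ ≤ ∑' l : ℕ, ‖Complex.log (1 - q ^ (l+1) * c)‖ := norm_tsum_le_tsum_norm hls
      _ ≤ ∑' l : ℕ, (3/2) * (M * ‖q‖ ^ (l+1)) := Summable.tsum_le_tsum hlog hls hgs
      _ = ((3/2) * M * ‖q‖) * ∑' l : ℕ, ‖q‖ ^ l := by
          rw [← tsum_mul_left]
          exact tsum_congr fun l => by rw [pow_succ]; ring
      _ = ((3/2) * M * ‖q‖) * (1 - ‖q‖)⁻¹ := by
          rw [tsum_geometric_of_lt_one (norm_nonneg q) (by linarith)]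
      _ ≤ ((3/2) * M * ‖q‖) * 2 := by
          apply mul_le_mul_of_nonneg_left _ (by positivity)
          have h2 : (1:ℝ)/2 ≤ 1 - ‖q‖ := by linarith
          calc (1 - ‖q‖)⁻¹ ≤ ((1:ℝ)/2)⁻¹ := by
                apply inv_anti₀ (by norm_num) h2
            _ = 2 := by norm_num
      _ = 3 * M * ‖q‖ := by ring

lemma ev_small (c : ℂ) : ∀ᶠ q : ℂ in nhds 0, ‖q‖ * max 1 ‖c‖ ≤ 1/2 := by
  set M := max 1 ‖c‖ with hM
  have hM0 : (0:ℝ) < M := lt_of_lt_of_le one_pos (le_max_left _ _)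
  have h : Tendsto (fun q : ℂ => ‖q‖) (nhds 0) (nhds 0) := by
    simpa using tendsto_norm_zero
  filter_upwards [h.eventually_lt_const (show (0:ℝ) < 1/(2*M) by positivity)] with q hq
  have h1 : ‖q‖ * M < (1/(2*M)) * M := mul_lt_mul_of_pos_right hq hM0
  have h2 : (1/(2*M)) * M = 1/2 := by field_simp
  linarith


lemma tsum_log_tendsto (c : ℂ) :
    Filter.Tendsto (fun q : ℂ => Slog c q) (nhds 0) (nhds 0) := by
  refine squeeze_zero_norm' (a := fun q : ℂ => 3 * max 1 ‖c‖ * ‖q‖) ?_ ?_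
  · filter_upwards [ev_small c] with q hq using (hasProd_and_bound c q hq).2
  · have h : Filter.Tendsto (fun q : ℂ => ‖q‖) (nhds 0) (nhds 0) := by
      simpa using tendsto_norm_zero
  
    simpa using h.const_mul (3 * max 1 ‖c‖)

lemma triple_tendsto (A B : ℂ) :
    Tendsto (fun q : ℂ => ∏' l : ℕ,
        (1 - q ^ (l + 1)) * (1 - q ^ (l + 1) * A) * (1 - q ^ (l + 1) * B))
      (nhds 0) (nhds 1) := by
  have hev : ∀ᶠ q : ℂ in nhds 0,
      (∏' l : ℕ, (1 - q ^ (l + 1)) * (1 - q ^ (l + 1) * A) * (1 - q ^ (l + 1) * B))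
        = Complex.exp (Slog 1 q) * Complex.exp (Slog A q) * Complex.exp (Slog B q) := by
    filter_upwards [ev_small 1, ev_small A, ev_small B] with q hq1 hqA hqB
    have p1 := (hasProd_and_bound 1 q hq1).1
    have pA := (hasProd_and_bound A q hqA).1
    have pB := (hasProd_and_bound B q hqB).1
    have h := (p1.mul pA).mul pB
    simp only [mul_one] at h
    exact h.tprod_eq
  have hexp : ∀ c : ℂ, Tendsto (fun q : ℂ => Complex.exp (Slog c q)) (nhds 0) (nhds 1) := by
    intro c
    have := (Complex.continuous_exp.tendsto 0).comp (tsum_log_tendsto c)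
    simpa [Function.comp_def] using this
  have hT : Tendsto (fun q : ℂ =>
      Complex.exp (Slog 1 q) * Complex.exp (Slog A q) * Complex.exp (Slog B q))
      (nhds 0) (nhds 1) := by
    simpa using ((hexp 1).mul (hexp A)).mul (hexp B)
  exact hT.congr' (by filter_upwards [hev] with q hq using hq.symm)

lemma qlim : Tendsto (fun τ : ℂ => Complex.exp (2 * (π:ℂ) * I * τ))
    (Filter.comap Complex.im Filter.atTop) (nhds 0) := by
  rw [tendsto_zero_iff_norm_tendsto_zero]
  have hre : ∀ τ : ℂ, ‖Complex.exp (2 * (π:ℂ) * I * τ)‖ = Real.exp (-(2 * π * τ.im)) := by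
    intro τ
    rw [Complex.norm_exp]
    congr 1
    simp [Complex.mul_re, Complex.mul_im]
  simp only [hre]
  have h1 : Tendsto (fun τ : ℂ => τ.im) (Filter.comap Complex.im Filter.atTop) Filter.atTop :=
    tendsto_comap
  have h2 : Tendsto (fun y : ℝ => -(2 * π * y)) Filter.atTop Filter.atBot := by
    have := (tendsto_id (α := ℝ) (x := Filter.atTop)).const_mul_atTop
      (show (0:ℝ) < 2 * π by positivity)
    exact tendsto_neg_atTop_atBot.comp this
  exact Real.tendsto_exp_atBot.comp (h2.comp h1)


noncomputable def ThProd (w τ : ℂ) : ℂ := ∏' l : ℕ,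
  (1 - Complex.exp (2 * (π : ℂ) * I * τ) ^ (l + 1)) *
  (1 - Complex.exp (2 * (π : ℂ) * I * τ) ^ (l + 1) * Complex.exp (2 * (π : ℂ) * I * w)) *
  (1 - Complex.exp (2 * (π : ℂ) * I * τ) ^ (l + 1) * Complex.exp (-(2 * (π : ℂ) * I * w)))


lemma theta_prod_tendsto (w : ℂ) :
    Filter.Tendsto (fun τ : ℂ => ThProd w τ) (Filter.comap Complex.im Filter.atTop) (nhds 1) :=
  (triple_tendsto (Complex.exp (2 * (π:ℂ) * I * w)) (Complex.exp (-(2 * (π:ℂ) * I * w)))).comp qlim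

lemma jacobiThetaProd_eq (w τ : ℂ) : jacobiThetaProd w τ =
    Complex.exp ((π : ℂ) * I * τ / 4) * (2 * Complex.sin ((π : ℂ) * w)) * ThProd w τ := rfl


lemma sin_ratio (α : ℝ) (x z : ℂ)
    (hu : Complex.exp (2 * (π : ℂ) * I * z) ≠ 1)
    (hua : Complex.exp (2 * (π : ℂ) * I * ((α : ℂ) + 1) * z) ≠ 1)
    (hx1 : Complex.exp x ≠ Complex.exp (2 * (π : ℂ) * I * z)) :
    (2 * Complex.sin ((π : ℂ) * (x / (2 * (π : ℂ) * I) - ((α : ℂ) + 1) * z))) *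
      (2 * Complex.sin ((π : ℂ) * (-z))) /
    ((2 * Complex.sin ((π : ℂ) * (x / (2 * (π : ℂ) * I) - z))) *
      (2 * Complex.sin ((π : ℂ) * (-(((α : ℂ) + 1) * z))))) =
    (Complex.exp (2 * (π : ℂ) * I * z) - 1) *
        (1 - Complex.exp (2 * (π : ℂ) * I * ((α : ℂ) + 1) * z) * Complex.exp (-x)) /
      ((Complex.exp (2 * (π : ℂ) * I * ((α : ℂ) + 1) * z) - 1) *
        (1 - Complex.exp (2 * (π : ℂ) * I * z) * Complex.exp (-x))) := by
  have hpi : (π : ℂ) ≠ 0 := Complex.ofReal_ne_zero.mpr Real.pi_ne_zero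
  have hI : (I : ℂ) ≠ 0 := Complex.I_ne_zero
  set a : ℂ := (α : ℂ) + 1 with ha
  set P : ℂ := Complex.exp (x / 2) with hPdef
  set V : ℂ := Complex.exp ((π : ℂ) * I * z) with hVdef
  set W : ℂ := Complex.exp ((π : ℂ) * I * (a * z)) with hWdef
  have hP : P ≠ 0 := Complex.exp_ne_zero _
  have hV : V ≠ 0 := Complex.exp_ne_zero _
  have hW : W ≠ 0 := Complex.exp_ne_zero _
  have hU : Complex.exp (2 * (π : ℂ) * I * z) = V * V := by
    rw [hVdef, ← Complex.exp_add]; congr 1; ring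
  have hUc : Complex.exp (2 * (π : ℂ) * I * a * z) = W * W := by
    rw [hWdef, ← Complex.exp_add]; congr 1; ring
  have hX : Complex.exp x = P * P := by
    rw [hPdef, ← Complex.exp_add]; congr 1; ring
  have hXm : Complex.exp (-x) = P⁻¹ * P⁻¹ := by
    rw [hPdef, ← Complex.exp_neg, ← Complex.exp_add]; congr 1; ring
  have hs : ∀ t : ℂ, 2 * Complex.sin t = (Complex.exp (-t * I) - Complex.exp (t * I)) * I := by
    intro t; rw [Complex.sin]; ring
  rw [hs, hs, hs, hs, hU, hUc, hXm]
  have e1m : Complex.exp (-((π : ℂ) * (x / (2 * (π : ℂ) * I) - a * z)) * I) = P⁻¹ * W := by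
    rw [hPdef, hWdef, ← Complex.exp_neg, ← Complex.exp_add]; congr 1; field_simp; ring
  have e1p : Complex.exp (((π : ℂ) * (x / (2 * (π : ℂ) * I) - a * z)) * I) = P * W⁻¹ := by
    rw [hPdef, hWdef, ← Complex.exp_neg, ← Complex.exp_add]; congr 1; field_simp; ring
  have e2m : Complex.exp (-((π : ℂ) * (-z)) * I) = V := by
    rw [hVdef]; congr 1; ring
  have e2p : Complex.exp (((π : ℂ) * (-z)) * I) = V⁻¹ := by
    rw [hVdef, ← Complex.exp_neg]; congr 1; ring
  have e3m : Complex.exp (-((π : ℂ) * (x / (2 * (π : ℂ) * I) - z)) * I) = P⁻¹ * V := by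
    rw [hPdef, hVdef, ← Complex.exp_neg, ← Complex.exp_add]; congr 1; field_simp; ring
  have e3p : Complex.exp (((π : ℂ) * (x / (2 * (π : ℂ) * I) - z)) * I) = P * V⁻¹ := by
    rw [hPdef, hVdef, ← Complex.exp_neg, ← Complex.exp_add]; congr 1; field_simp; ring
  have e4m : Complex.exp (-((π : ℂ) * (-(a * z))) * I) = W := by
    rw [hWdef]; congr 1; ring
  have e4p : Complex.exp (((π : ℂ) * (-(a * z))) * I) = W⁻¹ := by
    rw [hWdef, ← Complex.exp_neg]; congr 1; ring
  rw [e1m, e1p, e2m, e2p, e3m, e3p, e4m, e4p]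
  -- nonzero denominators
  have hPV : P * P ≠ V * V := by rw [← hX, ← hU]; exact hx1
  have hW1 : W * W ≠ 1 := by rw [← hUc]; exact hua
  have hV1 : V * V ≠ 1 := by rw [← hU]; exact hu
  have hd1 : P⁻¹ * V - P * V⁻¹ ≠ 0 := by
    intro h
    apply hPV
    have h2 : P⁻¹ * V = P * V⁻¹ := sub_eq_zero.mp h
    field_simp at h2
    linear_combination -h2
  have hd2 : W - W⁻¹ ≠ 0 := by
    intro h
    apply hW1
    have h2 : W = W⁻¹ := sub_eq_zero.mp h
    field_simp at h2
    linear_combination h2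
  have hden1 : W * W - 1 ≠ 0 := sub_ne_zero.mpr hW1
  have hden2 : 1 - V * V * (P⁻¹ * P⁻¹) ≠ 0 := by
    intro h
    apply hPV
    field_simp at h
    linear_combination h
  rw [div_eq_div_iff (by simp [Complex.I_ne_zero, hd1, hd2] : ((P⁻¹ * V - P * V⁻¹) * I) * ((W - W⁻¹) * I) ≠ 0) (mul_ne_zero hden1 hden2)]
  field_simp
  ring

end PsiAux
open Filter

/-- The `q → 0` limit of the exceptional-divisor factor `Ψ`: with `u = e^{2πiz}` and
`u^{α+1} = e^{2πi(α+1)z}`, as `Im τ → +∞`,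
`Ψ(x,α,z,τ) → (u−1)(1−u^{α+1}e^{−x})/((u^{α+1}−1)(1−u·e^{−x}))`. -/
theorem Psi_limit (α : ℝ) (x z : ℂ)
    (hu : Complex.exp (2 * (π : ℂ) * I * z) ≠ 1)
    (hua : Complex.exp (2 * (π : ℂ) * I * ((α : ℂ) + 1) * z) ≠ 1)
    (hx1 : Complex.exp x ≠ Complex.exp (2 * (π : ℂ) * I * z))
    (hx2 : Complex.exp x ≠ Complex.exp (2 * (π : ℂ) * I * ((α : ℂ) + 1) * z)) :
    Filter.Tendsto (fun τ : ℂ => PsiFun x α z τ)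
      (Filter.comap Complex.im Filter.atTop)
      (nhds ((Complex.exp (2 * (π : ℂ) * I * z) - 1) *
          (1 - Complex.exp (2 * (π : ℂ) * I * ((α : ℂ) + 1) * z) * Complex.exp (-x)) /
        ((Complex.exp (2 * (π : ℂ) * I * ((α : ℂ) + 1) * z) - 1) *
          (1 - Complex.exp (2 * (π : ℂ) * I * z) * Complex.exp (-x))))) := by
  have key : ∀ E A1 A2 A3 A4 B1 B2 B3 B4 : ℂ, E ≠ 0 →
      (E * A1 * B1) * (E * A2 * B2) / ((E * A3 * B3) * (E * A4 * B4))
        = (A1 * A2 / (A3 * A4)) * (B1 * B2 / (B3 * B4)) := by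
    intro E A1 A2 A3 A4 B1 B2 B3 B4 hE
    rw [show (E * A1 * B1) * (E * A2 * B2) = (E * E) * ((A1 * A2) * (B1 * B2)) from by ring,
      show (E * A3 * B3) * (E * A4 * B4) = (E * E) * ((A3 * A4) * (B3 * B4)) from by ring,
      mul_div_mul_left _ _ (mul_ne_zero hE hE), div_mul_div_comm]
  have heq : ∀ τ : ℂ, PsiFun x α z τ =
      ((2 * Complex.sin ((π : ℂ) * (x / (2 * (π : ℂ) * I) - ((α : ℂ) + 1) * z))) *
        (2 * Complex.sin ((π : ℂ) * (-z))) /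
       ((2 * Complex.sin ((π : ℂ) * (x / (2 * (π : ℂ) * I) - z))) *
        (2 * Complex.sin ((π : ℂ) * (-(((α : ℂ) + 1) * z)))))) *
      (ThProd (x / (2 * (π : ℂ) * I) - ((α : ℂ) + 1) * z) τ * ThProd (-z) τ /
        (ThProd (x / (2 * (π : ℂ) * I) - z) τ * ThProd (-(((α : ℂ) + 1) * z)) τ)) := by
    intro τ
    unfold PsiFun
    rw [jacobiThetaProd_eq, jacobiThetaProd_eq, jacobiThetaProd_eq, jacobiThetaProd_eq]
    exact key _ _ _ _ _ _ _ _ _ (Complex.exp_ne_zero _)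
  have hQ : Tendsto (fun τ : ℂ =>
      ThProd (x / (2 * (π : ℂ) * I) - ((α : ℂ) + 1) * z) τ * ThProd (-z) τ /
        (ThProd (x / (2 * (π : ℂ) * I) - z) τ * ThProd (-(((α : ℂ) + 1) * z)) τ))
      (Filter.comap Complex.im Filter.atTop) (nhds 1) := by
    have h := ((theta_prod_tendsto (x / (2 * (π : ℂ) * I) - ((α : ℂ) + 1) * z)).mul
        (theta_prod_tendsto (-z))).div
      ((theta_prod_tendsto (x / (2 * (π : ℂ) * I) - z)).mul
        (theta_prod_tendsto (-(((α : ℂ) + 1) * z)))) (by norm_num)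
    rw [mul_one, div_one] at h
    exact h
  rw [← sin_ratio α x z hu hua hx1]
  have hlim := hQ.const_mul
    ((2 * Complex.sin ((π : ℂ) * (x / (2 * (π : ℂ) * I) - ((α : ℂ) + 1) * z))) *
        (2 * Complex.sin ((π : ℂ) * (-z))) /
       ((2 * Complex.sin ((π : ℂ) * (x / (2 * (π : ℂ) * I) - z))) *
        (2 * Complex.sin ((π : ℂ) * (-(((α : ℂ) + 1) * z))))))
  rw [mul_one] at hlim
  exact hlim.congr fun τ => (heq τ).symm
end
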